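/- Setting C := ∑_{z ∈ T(z⋄)} cn_{z⋄}(z)·r(z), the optimal one-shot scheduling cost satisfies (7/15)·C ≤ OPT1(𝒥) ≤ (8/7)·C, where OPT1(𝒥) denotes the minimum cost of a feasible machine configuration for 𝒥. -/

import Mathlib

open scoped Classical
open Finset MeasureTheory

namespace BSHM

noncomputable section

/-- The set of candidate parents of machine type `i`: types `j ∈ M` with `j > i`
and a strictly smaller normalized cost rate per capacity unit. -/
def pset (m : ℕ) (g r : ℕ → ℝ) (i : ℕ) : Set ℕ :=
  {j | j ≤ m ∧ i < j ∧ r j / g j < r i / g i}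

/-- The parent `p i` of machine type `i` (equal to `0` when the parent is undefined,
since any actual parent has index `≥ 2`). -/
def p (m : ℕ) (g r : ℕ → ℝ) (i : ℕ) : ℕ := sInf (pset m g r i)

/-- `pdef i` asserts that the parent of `i` is defined. -/
def pdef (m : ℕ) (g r : ℕ → ℝ) (i : ℕ) : Prop := (pset m g r i).Nonempty

/-- One step of the parent relation: `b` is the (defined) parent of `a`. -/
def pstep (m : ℕ) (g r : ℕ → ℝ) (a b : ℕ) : Prop :=
  pdef m g r a ∧ b = p m g r a

/-- `P i`: the set consisting of `i` together with all of its iterated parents. -/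
def P (m : ℕ) (g r : ℕ → ℝ) (i : ℕ) : Set ℕ :=
  {z | Relation.ReflTransGen (pstep m g r) i z}

/-- `A i`: the set of nodes in the tree rooted at `i`,
i.e. all `z ∈ M` having `i` as an ancestor (or equal to `i`). -/
def A (m : ℕ) (g r : ℕ → ℝ) (i : ℕ) : Set ℕ :=
  {z | 1 ≤ z ∧ z ≤ m ∧ i ∈ P m g r z}

/-- `v i`: the lowest-indexed node in the tree rooted at `i`. -/
def v (m : ℕ) (g r : ℕ → ℝ) (i : ℕ) : ℕ := sInf (A m g r i)

/-- `y i`: the younger siblings of `i` (same parent status, smaller index). -/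
def y (m : ℕ) (g r : ℕ → ℝ) (i : ℕ) : Set ℕ :=
  {z | 1 ≤ z ∧ z ≤ m ∧ z < i ∧ p m g r z = p m g r i}

/-- `esib i`: the elder siblings of `i`. -/
def esib (m : ℕ) (g r : ℕ → ℝ) (i : ℕ) : Set ℕ :=
  {z | 1 ≤ z ∧ z ≤ m ∧ i < z ∧ p m g r z = p m g r i}

/-- `T k := {k} ∪ ⋃_{z ∈ P(k)} y(z)`. -/
def T (m : ℕ) (g r : ℕ → ℝ) (k : ℕ) : Set ℕ :=
  {k} ∪ ⋃ z ∈ P m g r k, y m g r z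

/-- `T k` as a `Finset` (all relevant nodes lie in `{k} ∪ [1, m]`). -/
def TIcc (m : ℕ) (g r : ℕ → ℝ) (k : ℕ) : Finset ℕ :=
  (insert k (Finset.Icc 1 m)).filter (fun z => z ∈ T m g r k)

/-! ### Jobs and one-shot scheduling -/

variable {ι : Type*}

/-- The exact machine type of a job `J`: the least `z ∈ M` with `s J ≤ g z`. -/
def mty (m : ℕ) (g : ℕ → ℝ) (s : ι → ℝ) (J : ι) : ℕ :=
  sInf {z | 1 ≤ z ∧ z ≤ m ∧ s J ≤ g z}

/-- Total size of a finite set of jobs. -/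
def Ssum (s : ι → ℝ) (W : Finset ι) : ℝ := ∑ J ∈ W, s J

/-- `k0f X`: the highest-indexed exact machine type among the jobs of `X`. -/
def k0f (m : ℕ) (g : ℕ → ℝ) (s : ι → ℝ) (X : Finset ι) : ℕ :=
  X.sup (fun J => mty m g s J)

/-- `H z X`: the jobs of `X` whose exact machine type lies in the tree rooted at `z`. -/
def H (m : ℕ) (g r : ℕ → ℝ) (s : ι → ℝ) (z : ℕ) (X : Finset ι) : Finset ι :=
  X.filter (fun J => mty m g s J ∈ A m g r z)

/-- `SH X z := S(H_z(X))`. -/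
def SH (m : ℕ) (g r : ℕ → ℝ) (s : ι → ℝ) (X : Finset ι) (z : ℕ) : ℝ :=
  Ssum s (H m g r s z X)

/-- Feasibility of a machine configuration `w : M → ℕ` for the job set `X`. -/
def Feasible (m : ℕ) (g : ℕ → ℝ) (s : ι → ℝ) (X : Finset ι) (w : ℕ → ℕ) : Prop :=
  ∀ i, 1 ≤ i → i ≤ m →
    Ssum s (X.filter (fun J => i ≤ mty m g s J)) ≤ ∑ z ∈ Finset.Icc i m, (w z : ℝ) * g z

/-- The cost of a machine configuration. -/
def cost (m : ℕ) (r : ℕ → ℝ) (w : ℕ → ℕ) : ℝ :=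
  ∑ z ∈ Finset.Icc 1 m, (w z : ℝ) * r z

/-- The optimal one-shot scheduling cost for a job set `X`. -/
def OPT1 (m : ℕ) (g r : ℕ → ℝ) (s : ι → ℝ) (X : Finset ι) : ℝ :=
  sInf {c : ℝ | ∃ w : ℕ → ℕ, Feasible m g s X w ∧ c = cost m r w}

/-- The fractional machine configuration `cn_{z*}` for the job set `X`, with
highest-indexed machine type `zs`.  A node `i ∈ T(zs) \ {zs}` is the boundary
type `i*` exactly when `∑_{z ∈ T(zs), z > i} S(H_z) ≤ cn(zs)·g(zs) <
∑_{z ∈ T(zs), z ≥ i} S(H_z)`; nodes above the boundary get `0`,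
nodes below it get `S(H_i)/g_i`. -/
def cn (m : ℕ) (g r : ℕ → ℝ) (s : ι → ℝ) (X : Finset ι) (zs i : ℕ) : ℝ :=
  let B : ℝ := (⌈SH m g r s X zs / g zs⌉₊ : ℝ) * g zs
  let Sge : ℝ := ∑ z ∈ (TIcc m g r zs).filter (fun z => i ≤ z), SH m g r s X z
  let Sgt : ℝ := ∑ z ∈ (TIcc m g r zs).filter (fun z => i < z), SH m g r s X z
  if i = zs then (⌈SH m g r s X zs / g zs⌉₊ : ℝ)
  else if i ∈ T m g r zs then
    (if Sgt ≤ B ∧ B < Sge then (Sge - B) / g i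
     else if B < Sgt then SH m g r s X i / g i
     else 0)
  else 0

/-- `cn_{zs}` is decent: for every strict ancestor `zt` of `zs`, the total cost of
the machines of types in `T(zs) ∩ A(zt)` is at most the cost of one type-`zt` machine. -/
def decent (m : ℕ) (g r : ℕ → ℝ) (s : ι → ℝ) (X : Finset ι) (zs : ℕ) : Prop :=
  ∀ zt ∈ P m g r zs, zt ≠ zs →
    (∑ z ∈ (TIcc m g r zs).filter (fun z => z ∈ A m g r zt), cn m g r s X zs z * r z) ≤ r zt

/-- `z⋄(X)`: the least `z* ∈ P(k0(X))` such that `cn_{z*}` is decent. -/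
def zdia (m : ℕ) (g r : ℕ → ℝ) (s : ι → ℝ) (X : Finset ι) : ℕ :=
  sInf {zs | zs ∈ P m g r (k0f m g s X) ∧ decent m g r s X zs}

/-- The child of `zd` whose subtree contains node `k`. -/
def chil (m : ℕ) (g r : ℕ → ℝ) (zd k : ℕ) : ℕ :=
  sInf {i | p m g r i = zd ∧ k ∈ A m g r i}

/-- The node `i ∈ T(zd)` whose subtree contains node `k`. -/
def idxT (m : ℕ) (g r : ℕ → ℝ) (zd k : ℕ) : ℕ :=
  sInf {i | i ∈ T m g r zd ∧ k ∈ A m g r i}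

/-- The children `f(zd)` of node `zd`, as a `Finset`. -/
def fchFin (m : ℕ) (g r : ℕ → ℝ) (zd : ℕ) : Finset ℕ :=
  (Finset.Icc 1 m).filter (fun z => p m g r z = zd)

/-- The cost `r̃(X)(J)` charged to the job `J` of the job set `X`. -/
def charge (m : ℕ) (g r : ℕ → ℝ) (s : ι → ℝ) (X : Finset ι) (J : ι) : ℝ :=
  let zd := zdia m g r s X
  let ρ : ℕ → ℝ := fun i => r i / g i
  let Hh := X.filter (fun J' => mty m g s J' = zd)
  let c : ℝ := Ssum s Hh * ρ zd + ∑ i ∈ fchFin m g r zd, SH m g r s X i * ρ i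
  if mty m g s J ∈ A m g r zd then
    if g zd ≤ SH m g r s X zd then s J * ρ zd
    else if r zd < c then
      if mty m g s J = zd then s J * ρ zd
      else
        s J * (ρ (chil m g r zd (mty m g s J)) -
          (ρ (chil m g r zd (mty m g s J)) - ρ zd) *
            ((c - r zd) /
              (∑ i ∈ fchFin m g r zd, ∑ J' ∈ H m g r s i X, s J' * (ρ i - ρ zd))))
    else
      if mty m g s J = zd then s J * ρ zd * (1 + (r zd - c) / (Ssum s Hh * ρ zd))
      else s J * ρ (chil m g r zd (mty m g s J))
  else s J * ρ (idxT m g r zd (mty m g s J))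

end

end BSHM

namespace BSHM

section Basics
variable {m : ℕ} {g r : ℕ → ℝ}

lemma p_mem_pset {i : ℕ} (h : pdef m g r i) : p m g r i ∈ pset m g r i :=
  Nat.sInf_mem h

lemma p_le {i j : ℕ} (h : j ∈ pset m g r i) : p m g r i ≤ j :=
  Nat.sInf_le h

lemma lt_p {i : ℕ} (h : pdef m g r i) : i < p m g r i := (p_mem_pset h).2.1

lemma p_le_m {i : ℕ} (h : pdef m g r i) : p m g r i ≤ m := (p_mem_pset h).1

lemma rho_p_lt {i : ℕ} (h : pdef m g r i) :
    r (p m g r i) / g (p m g r i) < r i / g i := (p_mem_pset h).2.2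

lemma pdef_of_mem {i j : ℕ} (h : j ∈ pset m g r i) : pdef m g r i := ⟨j, h⟩

lemma pdef_iff_p_ne_zero {i : ℕ} : pdef m g r i ↔ p m g r i ≠ 0 := by
  constructor
  · intro h
    have := lt_p h
    omega
  · intro h
    by_contra hc
    have : pset m g r i = ∅ := Set.not_nonempty_iff_eq_empty.mp hc
    simp [p, this, Nat.sInf_empty] at h

/-- the "beat" lemma: if `ρ j < ρ i` with `i < j ≤ m`, then `p i ≤ j` and `pdef i`. -/
lemma beat {i j : ℕ} (hij : i < j) (hjm : j ≤ m) (hρ : r j / g j < r i / g i) :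
    pdef m g r i ∧ p m g r i ≤ j := by
  have hmem : j ∈ pset m g r i := ⟨hjm, hij, hρ⟩
  exact ⟨pdef_of_mem hmem, p_le hmem⟩

/-- no-beat: if `i ≤ τ ≤ m` and `τ` is below `p i` (or `p i` undefined), then `ρ τ ≥ ρ i`. -/
lemma no_beat {i τ : ℕ} (hiτ : i ≤ τ) (hτm : τ ≤ m)
    (h : pdef m g r i → τ < p m g r i) :
    r i / g i ≤ r τ / g τ := by
  rcases eq_or_lt_of_le hiτ with h0 | h0
  · subst h0; rfl
  · by_contra hc
    push_neg at hc
    obtain ⟨hd, hle⟩ := beat h0 hτm hc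
    have := h hd
    omega

/-- chain members are above the base point. -/
lemma P_le {k z : ℕ} (h : z ∈ P m g r k) : k ≤ z := by
  induction h with
  | refl => exact le_refl _
  | tail _ hstep ih => exact le_trans ih (le_of_lt (hstep.2 ▸ lt_p hstep.1))

lemma P_le_m {k z : ℕ} (hk : k ≤ m) (h : z ∈ P m g r k) : z ≤ m := by
  induction h with
  | refl => exact hk
  | tail _ hstep ih => exact hstep.2 ▸ p_le_m hstep.1

lemma P_one_le {k z : ℕ} (hk : 1 ≤ k) (h : z ∈ P m g r k) : 1 ≤ z :=
  le_trans hk (P_le h)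

lemma rho_anti {k z : ℕ} (h : z ∈ P m g r k) : r z / g z ≤ r k / g k := by
  induction h with
  | refl => rfl
  | tail _ hstep ih => exact le_trans (le_of_lt (hstep.2 ▸ rho_p_lt hstep.1)) ih

lemma P_trans {k x z : ℕ} (hx : x ∈ P m g r k) (hz : z ∈ P m g r x) :
    z ∈ P m g r k := Relation.ReflTransGen.trans hx hz

lemma mem_P_step {k : ℕ} (h : pdef m g r k) : p m g r k ∈ P m g r k :=
  Relation.ReflTransGen.single ⟨h, rfl⟩

/-- head decomposition of chain membership. -/
lemma mem_P_cases {k z : ℕ} (h : z ∈ P m g r k) :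
    z = k ∨ (pdef m g r k ∧ z ∈ P m g r (p m g r k)) := by
  rcases Relation.ReflTransGen.cases_head h with h0 | ⟨c, hc, hcz⟩
  · exact Or.inl h0.symm
  · exact Or.inr ⟨hc.1, hc.2 ▸ hcz⟩

/-- totality of the chain order. -/
lemma P_total {k c c' : ℕ} (h : c ∈ P m g r k) (h' : c' ∈ P m g r k) :
    c' ∈ P m g r c ∨ c ∈ P m g r c' := by
  induction h using Relation.ReflTransGen.head_induction_on with
  | refl => exact Or.inl h'
  | head hstep _ ih =>
    rename_i a b _
    rcases mem_P_cases h' with h0 | ⟨hd, h1⟩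
    · subst h0
      exact Or.inr (Relation.ReflTransGen.head hstep (by assumption))
    · exact ih (hstep.2 ▸ h1)

lemma P_comparable {k c c' : ℕ} (h : c ∈ P m g r k) (h' : c' ∈ P m g r k)
    (hle : c ≤ c') : c' ∈ P m g r c := by
  rcases P_total h h' with h0 | h0
  · exact h0
  · have := P_le h0
    have : c = c' := le_antisymm hle this
    exact this ▸ Relation.ReflTransGen.refl

lemma P_of_not_pdef {k z : ℕ} (hk : ¬ pdef m g r k) (h : z ∈ P m g r k) :
    z = k := by
  rcases mem_P_cases h with h0 | ⟨hd, _⟩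
  · exact h0
  · exact absurd hd hk

end Basics
section Structure
variable {m : ℕ} {g r : ℕ → ℝ}

lemma mem_y_iff {x z : ℕ} : z ∈ y m g r x ↔
    1 ≤ z ∧ z ≤ m ∧ z < x ∧ p m g r z = p m g r x := Iff.rfl

lemma mem_T_iff {k z : ℕ} : z ∈ T m g r k ↔
    z = k ∨ ∃ x, x ∈ P m g r k ∧ z ∈ y m g r x := by
  simp [T, Set.mem_iUnion, Set.mem_union]

/-- a younger sibling of a chain element is never itself on the chain. -/
lemma not_y_and_P {k x z : ℕ} (hx : x ∈ P m g r k) (hzy : z ∈ y m g r x)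
    (hzP : z ∈ P m g r k) : False := by
  obtain ⟨_, _, hzx, hpz⟩ := hzy
  have hxPz : x ∈ P m g r z := P_comparable hzP hx (le_of_lt hzx)
  rcases mem_P_cases hxPz with h0 | ⟨hdz, h1⟩
  · omega
  · have hpne : p m g r x ≠ 0 := hpz ▸ (pdef_iff_p_ne_zero.mp hdz)
    have hdx : pdef m g r x := pdef_iff_p_ne_zero.mpr hpne
    have := P_le (hpz ▸ h1)
    have := lt_p hdx
    omega

/-- all elements of `T k` other than `k` are strictly below `k`. -/
lemma T_below {k z : ℕ} (hk1 : 1 ≤ k) (hkm : k ≤ m)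
    (hz : z ∈ T m g r k) (hne : z ≠ k) : z < k := by
  rcases mem_T_iff.mp hz with h0 | ⟨x, hxP, hzy⟩
  · exact absurd h0 hne
  obtain ⟨hz1, hzm, hzx, hpz⟩ := hzy
  by_contra hcon
  push_neg at hcon  -- k ≤ z
  classical
  set S : Finset ℕ := (Finset.Icc 1 m).filter
    (fun c => c ∈ P m g r k ∧ c ≤ z) with hS
  have hkS : k ∈ S := by
    simp only [hS, Finset.mem_filter, Finset.mem_Icc]
    exact ⟨⟨hk1, hkm⟩, Relation.ReflTransGen.refl, hcon⟩
  have hSne : S.Nonempty := ⟨k, hkS⟩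
  set c := S.max' hSne with hc
  have hcS : c ∈ S := S.max'_mem hSne
  simp only [hS, Finset.mem_filter, Finset.mem_Icc] at hcS
  obtain ⟨⟨hc1, hcm⟩, hcP, hcz⟩ := hcS
  have hczx : c < x := lt_of_le_of_lt hcz hzx
  have hxPc : x ∈ P m g r c := P_comparable hcP hxP (le_of_lt hczx)
  rcases mem_P_cases hxPc with h0 | ⟨hdc, hxppc⟩
  · omega
  have hpcx : p m g r c ≤ x := P_le hxppc
  have hpcP : p m g r c ∈ P m g r k := P_trans hcP (mem_P_step hdc)
  have hpcz : z < p m g r c := by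
    by_contra hcon2
    push_neg at hcon2
    have hmem : p m g r c ∈ S := by
      simp only [hS, Finset.mem_filter, Finset.mem_Icc]
      have := lt_p hdc
      exact ⟨⟨by omega, p_le_m hdc⟩, hpcP, hcon2⟩
    have := S.le_max' _ hmem
    have := lt_p hdc
    omega
  rcases eq_or_lt_of_le hcz with hceq | hclt
  · exact not_y_and_P hxP ⟨hz1, hzm, hzx, hpz⟩ (hceq ▸ hcP)
  · have hρcz : r c / g c ≤ r z / g z :=
      no_beat (le_of_lt hclt) hzm (fun _ => hpcz)
    have hρpc : r (p m g r c) / g (p m g r c) < r z / g z :=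
      lt_of_lt_of_le (rho_p_lt hdc) hρcz
    obtain ⟨hdz, hpzle⟩ := beat hpcz (p_le_m hdc) hρpc
    have hpne : p m g r x ≠ 0 := hpz ▸ (pdef_iff_p_ne_zero.mp hdz)
    have hdx : pdef m g r x := pdef_iff_p_ne_zero.mpr hpne
    have h1 := lt_p hdx
    rw [hpz] at hpzle
    omega

/-- two distinct elements of `T k` are never chain-comparable. -/
lemma T_P_eq {k z z' : ℕ} (hk1 : 1 ≤ k) (hkm : k ≤ m)
    (hz : z ∈ T m g r k) (hz' : z' ∈ T m g r k)
    (h : z' ∈ P m g r z) : z' = z := by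
  by_contra hne
  rcases mem_T_iff.mp hz with h0 | ⟨x, hxP, hzy⟩
  · subst h0
    rcases mem_T_iff.mp hz' with h1 | ⟨x', hx'P, hz'y⟩
    · exact hne h1
    · exact not_y_and_P hx'P hz'y h
  · rcases mem_P_cases h with h0 | ⟨hdz, h1⟩
    · exact hne h0
    have hpz := hzy.2.2.2
    rw [hpz] at h1
    have hpne : p m g r x ≠ 0 := hpz ▸ (pdef_iff_p_ne_zero.mp hdz)
    have hdx : pdef m g r x := pdef_iff_p_ne_zero.mpr hpne
    have hpxP : p m g r x ∈ P m g r k := P_trans hxP (mem_P_step hdx)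
    have hz'P : z' ∈ P m g r k := P_trans hpxP h1
    rcases mem_T_iff.mp hz' with h2 | ⟨x', hx'P, hz'y⟩
    · subst h2
      have h3 := P_le h1
      have h4 := P_le hxP
      have h5 := lt_p hdx
      omega
    · exact not_y_and_P hx'P hz'y hz'P

lemma A_disjoint {k z z' : ℕ} (hk1 : 1 ≤ k) (hkm : k ≤ m)
    (hz : z ∈ T m g r k) (hz' : z' ∈ T m g r k) (hne : z ≠ z')
    {t : ℕ} (ht : t ∈ A m g r z) (ht' : t ∈ A m g r z') : False := by
  have h1 : z ∈ P m g r t := ht.2.2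
  have h2 : z' ∈ P m g r t := ht'.2.2
  rcases P_total h1 h2 with h0 | h0
  · exact hne (T_P_eq hk1 hkm hz hz' h0).symm
  · exact hne (T_P_eq hk1 hkm hz' hz h0)

/-- membership of `T`-elements in `[1, m]`. -/
lemma T_bounds {k z : ℕ} (hk1 : 1 ≤ k) (hkm : k ≤ m) (hz : z ∈ T m g r k) :
    1 ≤ z ∧ z ≤ m := by
  rcases mem_T_iff.mp hz with h0 | ⟨x, _, hzy⟩
  · omega
  · exact ⟨hzy.1, hzy.2.1⟩

lemma mem_TIcc_iff {k z : ℕ} (hk1 : 1 ≤ k) (hkm : k ≤ m) :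
    z ∈ TIcc m g r k ↔ z ∈ T m g r k := by
  unfold TIcc
  rw [Finset.mem_filter]
  constructor
  · exact fun h => h.2
  · intro h
    refine ⟨?_, h⟩
    have := T_bounds hk1 hkm h
    simp only [Finset.mem_insert, Finset.mem_Icc]
    omega

/-- existence of the maximal chain element, which is a root. -/
lemma exists_maxP {k : ℕ} (hk1 : 1 ≤ k) (hkm : k ≤ m) :
    ∃ mx ∈ P m g r k, ¬ pdef m g r mx ∧ ∀ c ∈ P m g r k, c ≤ mx := by
  classical
  set S : Finset ℕ := (Finset.Icc 1 m).filter (fun c => c ∈ P m g r k) with hS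
  have hkS : k ∈ S := by
    simp only [hS, Finset.mem_filter, Finset.mem_Icc]
    exact ⟨⟨hk1, hkm⟩, Relation.ReflTransGen.refl⟩
  have hSne : S.Nonempty := ⟨k, hkS⟩
  set mx := S.max' hSne with hmx
  have hmxS : mx ∈ S := S.max'_mem hSne
  simp only [hS, Finset.mem_filter, Finset.mem_Icc] at hmxS
  have hub : ∀ c ∈ P m g r k, c ≤ mx := by
    intro c hc
    apply S.le_max'
    simp only [hS, Finset.mem_filter, Finset.mem_Icc]
    exact ⟨⟨P_one_le hk1 hc, P_le_m hkm hc⟩, hc⟩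
  refine ⟨mx, hmxS.2, ?_, hub⟩
  intro hd
  have h1 : p m g r mx ∈ P m g r k := P_trans hmxS.2 (mem_P_step hd)
  have := hub _ h1
  have := lt_p hd
  omega

end Structure
section Cover
variable {m : ℕ} {g r : ℕ → ℝ}

lemma p_eq_zero {i : ℕ} (h : ¬ pdef m g r i) : p m g r i = 0 := by
  by_contra hc
  exact h (pdef_iff_p_ne_zero.mpr hc)

lemma cover_aux {zs : ℕ} (hz1 : 1 ≤ zs) (hzm : zs ≤ m) :
    ∀ n t, 1 ≤ t → t ≤ zs → zs - t ≤ n →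
      ∃ z, z ∈ T m g r zs ∧ t ∈ A m g r z := by
  intro n
  induction n with
  | zero =>
    intro t ht1 htzs hle
    have : t = zs := by omega
    subst this
    exact ⟨t, mem_T_iff.mpr (Or.inl rfl), ⟨ht1, by omega, Relation.ReflTransGen.refl⟩⟩
  | succ n ih =>
    intro t ht1 htzs hle
    rcases eq_or_lt_of_le htzs with heq | hlt
    · subst heq
      exact ⟨t, mem_T_iff.mpr (Or.inl rfl), ⟨ht1, by omega, Relation.ReflTransGen.refl⟩⟩
    by_cases hd : pdef m g r t
    · have htb : t < p m g r t := lt_p hd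
      have hbm : p m g r t ≤ m := p_le_m hd
      by_cases hb : p m g r t ≤ zs
      · obtain ⟨z, hzT, hbA⟩ := ih (p m g r t) (by omega) hb (by omega)
        refine ⟨z, hzT, ⟨ht1, by omega, ?_⟩⟩
        exact Relation.ReflTransGen.head ⟨hd, rfl⟩ hbA.2.2
      · push_neg at hb
        classical
        set S : Finset ℕ := (Finset.Icc 1 m).filter
          (fun c => c ∈ P m g r zs ∧ c < p m g r t) with hS
        have hzsS : zs ∈ S := by
          simp only [hS, Finset.mem_filter, Finset.mem_Icc]
          exact ⟨⟨hz1, hzm⟩, Relation.ReflTransGen.refl, hb⟩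
        have hSne : S.Nonempty := ⟨zs, hzsS⟩
        set c := S.max' hSne with hcdef
        have hcS : c ∈ S := S.max'_mem hSne
        simp only [hS, Finset.mem_filter, Finset.mem_Icc] at hcS
        obtain ⟨⟨hc1, hcm⟩, hcP, hcb⟩ := hcS
        have hzsc : zs ≤ c := P_le hcP
        have hρtc : r t / g t ≤ r c / g c :=
          no_beat (by omega) hcm (fun _ => hcb)
        have hρbc : r (p m g r t) / g (p m g r t) < r c / g c :=
          lt_of_lt_of_le (rho_p_lt hd) hρtc
        obtain ⟨hdc, hpcb⟩ := beat hcb hbm hρbc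
        have hpceq : p m g r c = p m g r t := by
          rcases eq_or_lt_of_le hpcb with h0 | h0
          · exact h0
          · exfalso
            have hmem : p m g r c ∈ S := by
              simp only [hS, Finset.mem_filter, Finset.mem_Icc]
              have h1 := lt_p hdc
              exact ⟨⟨by omega, p_le_m hdc⟩, P_trans hcP (mem_P_step hdc), h0⟩
            have := S.le_max' _ hmem
            have := lt_p hdc
            omega
        have htT : t ∈ T m g r zs := by
          refine mem_T_iff.mpr (Or.inr ⟨c, hcP, ⟨ht1, by omega, by omega, ?_⟩⟩)
          rw [hpceq]
        exact ⟨t, htT, ⟨ht1, by omega, Relation.ReflTransGen.refl⟩⟩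
    · obtain ⟨mx, hmxP, hmxnd, hub⟩ := exists_maxP (m := m) (g := g) (r := r) hz1 hzm
      have hzsmx : zs ≤ mx := P_le hmxP
      have htT : t ∈ T m g r zs := by
        refine mem_T_iff.mpr (Or.inr ⟨mx, hmxP, ⟨ht1, by omega, by omega, ?_⟩⟩)
        rw [p_eq_zero hd, p_eq_zero hmxnd]
      exact ⟨t, htT, ⟨ht1, by omega, Relation.ReflTransGen.refl⟩⟩

lemma cover {zs : ℕ} (hz1 : 1 ≤ zs) (hzm : zs ≤ m) {t : ℕ}
    (ht1 : 1 ≤ t) (htzs : t ≤ zs) :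
    ∃ z, z ∈ T m g r zs ∧ t ∈ A m g r z :=
  cover_aux hz1 hzm (zs - t) t ht1 htzs (le_refl _)

end Cover
section PosGeo
variable {m : ℕ} {g r : ℕ → ℝ}

lemma g_pos (hg1 : 0 < g 1) (hg : ∀ i j, 1 ≤ i → i < j → j ≤ m → g i < g j)
    {z : ℕ} (h1 : 1 ≤ z) (h2 : z ≤ m) : 0 < g z := by
  rcases eq_or_lt_of_le h1 with h0 | h0
  · rwa [← h0]
  · exact lt_trans hg1 (hg 1 z (le_refl _) h0 h2)

lemma r_pos (hr1 : 0 < r 1) (hr : ∀ i j, 1 ≤ i → i < j → j ≤ m → r i < r j)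
    {z : ℕ} (h1 : 1 ≤ z) (h2 : z ≤ m) : 0 < r z := by
  rcases eq_or_lt_of_le h1 with h0 | h0
  · rwa [← h0]
  · exact lt_trans hr1 (hr 1 z (le_refl _) h0 h2)

lemma r_mono (hr : ∀ i j, 1 ≤ i → i < j → j ≤ m → r i < r j)
    {a b : ℕ} (h1 : 1 ≤ a) (hab : a ≤ b) (hbm : b ≤ m) : r a ≤ r b := by
  rcases eq_or_lt_of_le hab with h0 | h0
  · rw [h0]
  · exact le_of_lt (hr a b h1 h0 hbm)

lemma pow8_le {x z : ℝ} (hx : ∃ n : ℤ, x = (8:ℝ) ^ n) (hz : ∃ n : ℤ, z = (8:ℝ) ^ n)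
    (hxz : x < z) : 8 * x ≤ z := by
  obtain ⟨n1, rfl⟩ := hx
  obtain ⟨n2, rfl⟩ := hz
  have h8 : (1:ℝ) < 8 := by norm_num
  have hn : n1 < n2 := by
    by_contra hc
    push_neg at hc
    exact absurd (zpow_le_zpow_right₀ (le_of_lt h8) hc) (not_le.mpr hxz)
  calc 8 * (8:ℝ) ^ n1 = (8:ℝ) ^ (n1 + 1) := by
        rw [zpow_add₀ (by norm_num : (8:ℝ) ≠ 0)]; ring
    _ ≤ (8:ℝ) ^ n2 := zpow_le_zpow_right₀ (le_of_lt h8) (by omega)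

lemma geo_aux (hr1 : 0 < r 1) (hr : ∀ i j, 1 ≤ i → i < j → j ≤ m → r i < r j)
    (hr8 : ∀ z, 1 ≤ z → z ≤ m → ∃ n : ℤ, r z = (8 : ℝ) ^ n) :
    ∀ N : ℕ, ∀ ztop : ℕ, 1 ≤ ztop → ztop ≤ m → ∀ F : Finset ℕ, F.card ≤ N →
      (∀ z ∈ F, 1 ≤ z ∧ z ≤ m ∧ z < ztop) → ∑ z ∈ F, r z ≤ r ztop / 7 := by
  intro N
  induction N with
  | zero =>
    intro ztop h1 h2 F hcard _
    have : F = ∅ := Finset.card_eq_zero.mp (by omega)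
    subst this
    simp only [Finset.sum_empty]
    have := r_pos hr1 hr h1 h2
    positivity
  | succ N ih =>
    intro ztop h1 h2 F hcard hF
    rcases F.eq_empty_or_nonempty with h0 | h0
    · subst h0
      simp only [Finset.sum_empty]
      have := r_pos hr1 hr h1 h2
      positivity
    · set M := F.max' h0 with hM
      have hMF : M ∈ F := F.max'_mem h0
      obtain ⟨hM1, hMm, hMz⟩ := hF M hMF
      have hsum : ∑ z ∈ F, r z = r M + ∑ z ∈ F.erase M, r z :=
        (Finset.add_sum_erase F r hMF).symm
      have herase : ∑ z ∈ F.erase M, r z ≤ r M / 7 := by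
        apply ih M hM1 hMm
        · have := Finset.card_erase_of_mem hMF
          omega
        · intro z hz
          have hzF := Finset.mem_of_mem_erase hz
          have hne := Finset.ne_of_mem_erase hz
          have hle := F.le_max' z hzF
          obtain ⟨a1, a2, _⟩ := hF z hzF
          exact ⟨a1, a2, by omega⟩
      have hpow : 8 * r M ≤ r ztop :=
        pow8_le (hr8 M hM1 hMm) (hr8 ztop h1 h2) (hr M ztop hM1 hMz h2)
      linarith
lemma geo_sum (hr1 : 0 < r 1) (hr : ∀ i j, 1 ≤ i → i < j → j ≤ m → r i < r j)
    (hr8 : ∀ z, 1 ≤ z → z ≤ m → ∃ n : ℤ, r z = (8 : ℝ) ^ n)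
    {ztop : ℕ} (h1 : 1 ≤ ztop) (h2 : ztop ≤ m) (F : Finset ℕ)
    (hF : ∀ z ∈ F, 1 ≤ z ∧ z ≤ m ∧ z < ztop) : ∑ z ∈ F, r z ≤ r ztop / 7 :=
  geo_aux hr1 hr hr8 F.card ztop h1 h2 F (le_refl _) hF

end PosGeo

section Jobs
variable {m : ℕ} {g r : ℕ → ℝ} {ι : Type*} {s : ι → ℝ} {𝒥 : Finset ι}

lemma mty_spec (hm : 1 ≤ m) {J : ι} (h : s J ≤ g m) :
    1 ≤ mty m g s J ∧ mty m g s J ≤ m ∧ s J ≤ g (mty m g s J) :=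
  Nat.sInf_mem (⟨m, hm, le_refl m, h⟩ :
    {z | 1 ≤ z ∧ z ≤ m ∧ s J ≤ g z}.Nonempty)

lemma k0_le_m (hm : 1 ≤ m) (hs : ∀ J ∈ 𝒥, s J ≤ g m) : k0f m g s 𝒥 ≤ m :=
  Finset.sup_le fun J hJ => (mty_spec hm (hs J hJ)).2.1

lemma exists_k0 (hJ : 𝒥.Nonempty) : ∃ J ∈ 𝒥, k0f m g s 𝒥 = mty m g s J :=
  Finset.exists_mem_eq_sup 𝒥 hJ _

lemma k0_pos (hm : 1 ≤ m) (hJ : 𝒥.Nonempty) (hs : ∀ J ∈ 𝒥, s J ≤ g m) :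
    1 ≤ k0f m g s 𝒥 := by
  obtain ⟨J, hJm, hk⟩ := exists_k0 (s := s) (m := m) (g := g) hJ
  rw [hk]
  exact (mty_spec hm (hs J hJm)).1

lemma SH_nonneg (hs : ∀ J ∈ 𝒥, 0 ≤ s J) {z : ℕ} :
    0 ≤ SH m g r s 𝒥 z :=
  Finset.sum_nonneg fun J hJ => hs J (Finset.mem_of_mem_filter J hJ)

lemma zdia_spec (hk1 : 1 ≤ k0f m g s 𝒥) (hkm : k0f m g s 𝒥 ≤ m) :
    zdia m g r s 𝒥 ∈ P m g r (k0f m g s 𝒥) ∧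
      decent m g r s 𝒥 (zdia m g r s 𝒥) := by
  obtain ⟨mx, hmxP, hmxnd, _⟩ := exists_maxP (m := m) (g := g) (r := r) hk1 hkm
  have hmem : mx ∈ {zs | zs ∈ P m g r (k0f m g s 𝒥) ∧ decent m g r s 𝒥 zs} :=
    ⟨hmxP, fun zt hzt hne => absurd (P_of_not_pdef hmxnd hzt) hne⟩
  exact Nat.sInf_mem ⟨mx, hmem⟩

lemma zdia_min {zq : ℕ} (h1 : zq ∈ P m g r (k0f m g s 𝒥))
    (h2 : decent m g r s 𝒥 zq) : zdia m g r s 𝒥 ≤ zq :=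
  Nat.sInf_le ⟨h1, h2⟩

end Jobs
section CN
variable {m : ℕ} {g r : ℕ → ℝ} {ι : Type*} {s : ι → ℝ} {𝒥 : Finset ι}

lemma cn_at_zs {zs : ℕ} :
    cn m g r s 𝒥 zs zs = (⌈SH m g r s 𝒥 zs / g zs⌉₊ : ℝ) := by
  simp [cn]

lemma cn_outside {zs i : ℕ} (h : i ∉ T m g r zs) (hne : i ≠ zs) :
    cn m g r s 𝒥 zs i = 0 := by
  simp only [cn]
  rw [if_neg hne, if_neg h]

lemma cn_zs_lb (hg1 : 0 < g 1) (hg : ∀ i j, 1 ≤ i → i < j → j ≤ m → g i < g j)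
    {zs : ℕ} (h1 : 1 ≤ zs) (h2 : zs ≤ m) :
    SH m g r s 𝒥 zs ≤ cn m g r s 𝒥 zs zs * g zs := by
  rw [cn_at_zs]
  have hgz := g_pos hg1 hg h1 h2
  rw [← div_le_iff₀ hgz]
  exact Nat.le_ceil _

lemma cn_zs_r_ub (hg1 : 0 < g 1) (hg : ∀ i j, 1 ≤ i → i < j → j ≤ m → g i < g j)
    {zs : ℕ} (h1 : 1 ≤ zs) (h2 : zs ≤ m) (hrz : 0 ≤ r zs)
    (hSH : 0 ≤ SH m g r s 𝒥 zs) :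
    cn m g r s 𝒥 zs zs * r zs ≤ SH m g r s 𝒥 zs * (r zs / g zs) + r zs := by
  rw [cn_at_zs]
  have hgz := g_pos hg1 hg h1 h2
  have hceil : (⌈SH m g r s 𝒥 zs / g zs⌉₊ : ℝ) ≤ SH m g r s 𝒥 zs / g zs + 1 :=
    le_of_lt (Nat.ceil_lt_add_one (by positivity))
  have := mul_le_mul_of_nonneg_right hceil hrz
  calc (⌈SH m g r s 𝒥 zs / g zs⌉₊ : ℝ) * r zs
      ≤ (SH m g r s 𝒥 zs / g zs + 1) * r zs := this
    _ = SH m g r s 𝒥 zs * (r zs / g zs) + r zs := by field_simp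

lemma cn_nonneg (hg1 : 0 < g 1) (hg : ∀ i j, 1 ≤ i → i < j → j ≤ m → g i < g j)
    (hs : ∀ J ∈ 𝒥, 0 ≤ s J) {zs : ℕ} (h1 : 1 ≤ zs) (h2 : zs ≤ m) (i : ℕ) :
    0 ≤ cn m g r s 𝒥 zs i := by
  simp only [cn]
  split_ifs with hizs hiT hb1 hb2
  · positivity
  · -- boundary branch : (Sge - B)/g i with B < Sge
    have hiTb := T_bounds h1 h2 hiT
    have hgi := g_pos hg1 hg hiTb.1 hiTb.2
    have := hb1.2
    have hnum : (0:ℝ) ≤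
        (∑ z ∈ (TIcc m g r zs).filter (fun z => i ≤ z), SH m g r s 𝒥 z) -
          (⌈SH m g r s 𝒥 zs / g zs⌉₊ : ℝ) * g zs := by linarith
    positivity
  · have hiTb := T_bounds h1 h2 hiT
    have hgi := g_pos hg1 hg hiTb.1 hiTb.2
    have hSH : 0 ≤ SH m g r s 𝒥 i := SH_nonneg hs
    positivity
  · exact le_refl _
  · exact le_refl _

/-- for a non-root element of the tree, `cn i · g i ≤ SH i`. -/
lemma cn_mul_g_le (hg1 : 0 < g 1) (hg : ∀ i j, 1 ≤ i → i < j → j ≤ m → g i < g j)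
    (hs : ∀ J ∈ 𝒥, 0 ≤ s J) {zs i : ℕ} (h1 : 1 ≤ zs) (h2 : zs ≤ m)
    (hiT : i ∈ T m g r zs) (hne : i ≠ zs) :
    cn m g r s 𝒥 zs i * g i ≤ SH m g r s 𝒥 i := by
  have hiTb := T_bounds h1 h2 hiT
  have hgi := g_pos hg1 hg hiTb.1 hiTb.2
  have hiTIcc : i ∈ TIcc m g r zs := (mem_TIcc_iff h1 h2).mpr hiT
  have hsplit : (TIcc m g r zs).filter (fun z => i ≤ z) =
      insert i ((TIcc m g r zs).filter (fun z => i < z)) := by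
    ext z
    simp only [Finset.mem_filter, Finset.mem_insert]
    constructor
    · rintro ⟨hz, hiz⟩
      rcases eq_or_lt_of_le hiz with h0 | h0
      · exact Or.inl h0.symm
      · exact Or.inr ⟨hz, h0⟩
    · rintro (h0 | ⟨hz, h0⟩)
      · subst h0; exact ⟨hiTIcc, le_refl _⟩
      · exact ⟨hz, le_of_lt h0⟩
  have hnotmem : i ∉ (TIcc m g r zs).filter (fun z => i < z) := by
    simp only [Finset.mem_filter]
    omega
  have hsge : ∑ z ∈ (TIcc m g r zs).filter (fun z => i ≤ z), SH m g r s 𝒥 z =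
      SH m g r s 𝒥 i + ∑ z ∈ (TIcc m g r zs).filter (fun z => i < z), SH m g r s 𝒥 z := by
    rw [hsplit, Finset.sum_insert hnotmem]
  simp only [cn]
  rw [if_neg hne, if_pos hiT]
  split_ifs with hb1 hb2
  · rw [div_mul_cancel₀ _ (ne_of_gt hgi)]
    have := hb1.1
    linarith
  · rw [div_mul_cancel₀ _ (ne_of_gt hgi)]
  · have hSH : 0 ≤ SH m g r s 𝒥 i := SH_nonneg hs
    simp only [zero_mul]
    exact hSH

lemma cn_mul_r_le (hg1 : 0 < g 1) (hg : ∀ i j, 1 ≤ i → i < j → j ≤ m → g i < g j)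
    (hs : ∀ J ∈ 𝒥, 0 ≤ s J) {zs i : ℕ} (h1 : 1 ≤ zs) (h2 : zs ≤ m)
    (hiT : i ∈ T m g r zs) (hne : i ≠ zs) (hri : 0 ≤ r i) :
    cn m g r s 𝒥 zs i * r i ≤ SH m g r s 𝒥 i * (r i / g i) := by
  have hiTb := T_bounds h1 h2 hiT
  have hgi := g_pos hg1 hg hiTb.1 hiTb.2
  have h := cn_mul_g_le hg1 hg hs h1 h2 hiT hne
  have h2' := mul_le_mul_of_nonneg_right h (div_nonneg hri (le_of_lt hgi))
  calc cn m g r s 𝒥 zs i * r i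
      = cn m g r s 𝒥 zs i * g i * (r i / g i) := by
        field_simp
    _ ≤ SH m g r s 𝒥 i * (r i / g i) := h2'

lemma cn_val {zs i : ℕ} (hne : i ≠ zs) (hiT : i ∈ T m g r zs) :
    cn m g r s 𝒥 zs i =
      (if (∑ z ∈ (TIcc m g r zs).filter (fun z => i < z), SH m g r s 𝒥 z ≤
            (⌈SH m g r s 𝒥 zs / g zs⌉₊ : ℝ) * g zs ∧
          (⌈SH m g r s 𝒥 zs / g zs⌉₊ : ℝ) * g zs <
            ∑ z ∈ (TIcc m g r zs).filter (fun z => i ≤ z), SH m g r s 𝒥 z) then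
        ((∑ z ∈ (TIcc m g r zs).filter (fun z => i ≤ z), SH m g r s 𝒥 z) -
          (⌈SH m g r s 𝒥 zs / g zs⌉₊ : ℝ) * g zs) / g i
      else if (⌈SH m g r s 𝒥 zs / g zs⌉₊ : ℝ) * g zs <
          ∑ z ∈ (TIcc m g r zs).filter (fun z => i < z), SH m g r s 𝒥 z then
        SH m g r s 𝒥 i / g i
      else 0) := by
  simp only [cn]
  rw [if_neg hne, if_pos hiT]

/-- Key capacity property of the fractional configuration. -/
lemma cn_capacity (hg1 : 0 < g 1) (hg : ∀ i j, 1 ≤ i → i < j → j ≤ m → g i < g j)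
    (hs : ∀ J ∈ 𝒥, 0 ≤ s J) {zs : ℕ} (h1 : 1 ≤ zs) (h2 : zs ≤ m) (i : ℕ) :
    ∑ z ∈ (TIcc m g r zs).filter (fun z => i ≤ z), SH m g r s 𝒥 z ≤
      ∑ z ∈ (TIcc m g r zs).filter (fun z => i ≤ z), cn m g r s 𝒥 zs z * g z := by
  have hempty : ∀ j, m + 1 ≤ j →
      (TIcc m g r zs).filter (fun z => j ≤ z) = ∅ := by
    intro j hj
    apply Finset.filter_eq_empty_iff.mpr
    intro z hz
    have := T_bounds h1 h2 ((mem_TIcc_iff h1 h2).mp hz)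
    omega
  suffices h : ∀ n j, m + 1 ≤ j + n →
      ∑ z ∈ (TIcc m g r zs).filter (fun z => j ≤ z), SH m g r s 𝒥 z ≤
      ∑ z ∈ (TIcc m g r zs).filter (fun z => j ≤ z), cn m g r s 𝒥 zs z * g z by
    exact h (m + 1) i (by omega)
  intro n
  induction n with
  | zero =>
    intro j hj
    rw [hempty j (by omega)]
    simp only [Finset.sum_empty]
    exact le_refl _
  | succ n ih =>
    intro j hj
    by_cases hjm : m + 1 ≤ j
    · rw [hempty j hjm]
      simp only [Finset.sum_empty]
      exact le_refl _
    push_neg at hjm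
    -- split the filter at j
    have hfilt : ∀ (hj' : j ∉ TIcc m g r zs),
        (TIcc m g r zs).filter (fun z => j ≤ z) =
        (TIcc m g r zs).filter (fun z => j + 1 ≤ z) := by
      intro hj'
      apply Finset.filter_congr
      intro z hz
      try simp only [eq_iff_iff]
      constructor
      · intro h0
        rcases eq_or_lt_of_le h0 with h3 | h3
        · exact absurd (h3 ▸ hz) hj'
        · omega
      · omega
    by_cases hjT : j ∈ TIcc m g r zs
    · have hsplit : (TIcc m g r zs).filter (fun z => j ≤ z) =
          insert j ((TIcc m g r zs).filter (fun z => j + 1 ≤ z)) := by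
        ext z
        simp only [Finset.mem_filter, Finset.mem_insert]
        constructor
        · rintro ⟨hz, hiz⟩
          rcases eq_or_lt_of_le hiz with h0 | h0
          · exact Or.inl h0.symm
          · exact Or.inr ⟨hz, h0⟩
        · rintro (h0 | ⟨hz, h0⟩)
          · subst h0; exact ⟨hjT, le_refl _⟩
          · exact ⟨hz, by omega⟩
      have hnotmem : j ∉ (TIcc m g r zs).filter (fun z => j + 1 ≤ z) := by
        simp only [Finset.mem_filter]
        omega
      rw [hsplit, Finset.sum_insert hnotmem, Finset.sum_insert hnotmem]
      have ihj := ih (j + 1) (by omega)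
      by_cases hjzs : j = zs
      · subst hjzs
        have := cn_zs_lb (m := m) (s := s) (𝒥 := 𝒥) (r := r) hg1 hg h1 h2
        linarith
      · -- j ∈ T, j ≠ zs : the case analysis on the branches of cn
        have hjT' : j ∈ T m g r zs := (mem_TIcc_iff h1 h2).mp hjT
        have hjb := T_bounds h1 h2 hjT'
        have hgj := g_pos hg1 hg hjb.1 hjb.2
        have hjlt : j < zs := T_below h1 h2 hjT' hjzs
        -- the zs-term is part of the suffix sum beyond j
        have hzsmem : zs ∈ (TIcc m g r zs).filter (fun z => j + 1 ≤ z) := by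
          rw [Finset.mem_filter]
          exact ⟨(mem_TIcc_iff h1 h2).mpr (mem_T_iff.mpr (Or.inl rfl)), by omega⟩
        have hBle : (⌈SH m g r s 𝒥 zs / g zs⌉₊ : ℝ) * g zs ≤
            ∑ z ∈ (TIcc m g r zs).filter (fun z => j + 1 ≤ z), cn m g r s 𝒥 zs z * g z := by
          have hterm : cn m g r s 𝒥 zs zs * g zs =
              (⌈SH m g r s 𝒥 zs / g zs⌉₊ : ℝ) * g zs := by rw [cn_at_zs]
          calc (⌈SH m g r s 𝒥 zs / g zs⌉₊ : ℝ) * g zs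
              = cn m g r s 𝒥 zs zs * g zs := hterm.symm
            _ ≤ _ := by
              apply Finset.single_le_sum
                (f := fun z => cn m g r s 𝒥 zs z * g z) _ hzsmem
              intro z hz
              have hzT := (mem_TIcc_iff h1 h2).mp (Finset.mem_filter.mp hz).1
              have hzb := T_bounds h1 h2 hzT
              exact mul_nonneg (cn_nonneg hg1 hg hs h1 h2 z)
                (le_of_lt (g_pos hg1 hg hzb.1 hzb.2))
        -- the sums named in the definition of cn
        have hfgt : (TIcc m g r zs).filter (fun z => j < z) =
            (TIcc m g r zs).filter (fun z => j + 1 ≤ z) := by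
          apply Finset.filter_congr
          intro z _
          try simp only [eq_iff_iff]
          omega
        rw [cn_val hjzs hjT', hfgt]
        split_ifs with hb1 hb2
        · -- boundary
          rw [div_mul_cancel₀ _ (ne_of_gt hgj)]
          have hsge : ∑ z ∈ (TIcc m g r zs).filter (fun z => j ≤ z), SH m g r s 𝒥 z =
              SH m g r s 𝒥 j +
              ∑ z ∈ (TIcc m g r zs).filter (fun z => j + 1 ≤ z), SH m g r s 𝒥 z := by
            rw [hsplit, Finset.sum_insert hnotmem]
          rw [hsge] at hb1 ⊢
          linarith [hBle, hb1.2]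
        · rw [div_mul_cancel₀ _ (ne_of_gt hgj)]
          linarith
        · -- cn j = 0 : everything already fits below B
          push_neg at hb1
          have hsge2 : ∑ z ∈ (TIcc m g r zs).filter (fun z => j ≤ z), SH m g r s 𝒥 z ≤
              (⌈SH m g r s 𝒥 zs / g zs⌉₊ : ℝ) * g zs := by
            have hgt : ∑ z ∈ (TIcc m g r zs).filter (fun z => j + 1 ≤ z), SH m g r s 𝒥 z ≤
                (⌈SH m g r s 𝒥 zs / g zs⌉₊ : ℝ) * g zs := le_of_not_gt hb2
            exact hb1 hgt
          have hsge : ∑ z ∈ (TIcc m g r zs).filter (fun z => j ≤ z), SH m g r s 𝒥 z =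
              SH m g r s 𝒥 j +
              ∑ z ∈ (TIcc m g r zs).filter (fun z => j + 1 ≤ z), SH m g r s 𝒥 z := by
            rw [hsplit, Finset.sum_insert hnotmem]
          rw [hsge] at hsge2
          rw [zero_mul]
          linarith [hBle]
    · rw [hfilt hjT]
      exact ih (j + 1) (by omega)

end CN
section Dual
variable {m : ℕ} {g r : ℕ → ℝ} {ι : Type*} {s : ι → ℝ} {𝒥 : Finset ι}

lemma H_disj {k z z' : ℕ} (hk1 : 1 ≤ k) (hkm : k ≤ m)
    (hz : z ∈ T m g r k) (hz' : z' ∈ T m g r k) (hne : z ≠ z') :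
    Disjoint (H m g r s z 𝒥) (H m g r s z' 𝒥) := by
  rw [Finset.disjoint_left]
  intro J hJ hJ'
  have h1 := (Finset.mem_filter.mp hJ).2
  have h2 := (Finset.mem_filter.mp hJ').2
  exact A_disjoint hk1 hkm hz hz' hne h1 h2

lemma H_subset {z : ℕ} : H m g r s z 𝒥 ⊆ 𝒥 := Finset.filter_subset _ _

lemma V_le_SH (hm : 1 ≤ m) (hsnn : ∀ J ∈ 𝒥, 0 ≤ s J)
    (hsle : ∀ J ∈ 𝒥, s J ≤ g m) {zs : ℕ} (hzs1 : 1 ≤ zs) (hzsm : zs ≤ m)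
    (hk0 : k0f m g s 𝒥 ≤ zs) (i : ℕ) :
    Ssum s (𝒥.filter (fun J => i ≤ mty m g s J)) ≤
      ∑ z ∈ (TIcc m g r zs).filter (fun z => i ≤ z), SH m g r s 𝒥 z := by
  classical
  set F := (TIcc m g r zs).filter (fun z => i ≤ z) with hF
  have hFT : ∀ z ∈ F, z ∈ T m g r zs := by
    intro z hz
    exact (mem_TIcc_iff hzs1 hzsm).mp (Finset.mem_filter.mp hz).1
  set U := F.biUnion (fun z => H m g r s z 𝒥) with hU
  have hsub : 𝒥.filter (fun J => i ≤ mty m g s J) ⊆ U := by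
    intro J hJ
    obtain ⟨hJm, hile⟩ := Finset.mem_filter.mp hJ
    obtain ⟨h1, h2, _⟩ := mty_spec hm (hsle J hJm)
    have hk : mty m g s J ≤ k0f m g s 𝒥 := Finset.le_sup hJm
    obtain ⟨z, hzT, hzA⟩ := cover hzs1 hzsm h1 (le_trans hk hk0)
    have hmz : mty m g s J ≤ z := P_le hzA.2.2
    rw [hU, Finset.mem_biUnion]
    refine ⟨z, ?_, Finset.mem_filter.mpr ⟨hJm, hzA⟩⟩
    rw [hF, Finset.mem_filter]
    exact ⟨(mem_TIcc_iff hzs1 hzsm).mpr hzT, le_trans hile hmz⟩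
  have hdisj : ∀ x ∈ F, ∀ y ∈ F, x ≠ y →
      Disjoint (H m g r s x 𝒥) (H m g r s y 𝒥) :=
    fun x hx y hy hxy => H_disj hzs1 hzsm (hFT x hx) (hFT y hy) hxy
  calc Ssum s (𝒥.filter (fun J => i ≤ mty m g s J))
      ≤ ∑ J ∈ U, s J := by
        apply Finset.sum_le_sum_of_subset_of_nonneg hsub
        intro J hJU _
        rw [hU, Finset.mem_biUnion] at hJU
        obtain ⟨z, _, hJz⟩ := hJU
        exact hsnn J (H_subset hJz)
    _ = ∑ z ∈ F, ∑ J ∈ H m g r s z 𝒥, s J := Finset.sum_biUnion hdisj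
    _ = ∑ z ∈ F, SH m g r s 𝒥 z := rfl

end Dual
section DualLB
variable {m : ℕ} {g r : ℕ → ℝ} {ι : Type*} {s : ι → ℝ} {𝒥 : Finset ι}

/-- The dual / volume lower bound on the cost of any feasible configuration. -/
lemma dual_LB (hm : 1 ≤ m) (hg1 : 0 < g 1) (hr1 : 0 < r 1)
    (hg : ∀ i j, 1 ≤ i → i < j → j ≤ m → g i < g j)
    (hr : ∀ i j, 1 ≤ i → i < j → j ≤ m → r i < r j)
    (hsnn : ∀ J ∈ 𝒥, 0 ≤ s J) (hsle : ∀ J ∈ 𝒥, s J ≤ g m)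
    {w : ℕ → ℕ} (hw : Feasible m g s 𝒥 w)
    (N : Finset ℕ) (hN1 : ∀ z ∈ N, 1 ≤ z ∧ z ≤ m)
    (hNdisj : ∀ x ∈ N, ∀ y ∈ N, x ≠ y →
      Disjoint (H m g r s x 𝒥) (H m g r s y 𝒥))
    (hrate : ∀ z ∈ N, ∀ τ, 1 ≤ τ → τ ≤ m → w τ ≠ 0 →
      ∀ J ∈ H m g r s z 𝒥, mty m g s J ≤ τ → r z / g z ≤ r τ / g τ) :
    ∑ z ∈ N, SH m g r s 𝒥 z * (r z / g z) ≤ cost m r w := by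
  classical
  have hρnn : ∀ τ, 1 ≤ τ → τ ≤ m → 0 ≤ r τ / g τ := fun τ h1 h2 =>
    le_of_lt (div_pos (r_pos hr1 hr h1 h2) (g_pos hg1 hg h1 h2))
  set Mbig : ℝ := (∑ τ ∈ Finset.Icc 1 m, max (r τ / g τ) 0) + 1 with hMbig
  have hMb : ∀ τ, 1 ≤ τ → τ ≤ m → r τ / g τ ≤ Mbig := by
    intro τ h1 h2
    have h3 : r τ / g τ ≤ max (r τ / g τ) 0 := le_max_left _ _
    have h4 : max (r τ / g τ) 0 ≤ ∑ τ ∈ Finset.Icc 1 m, max (r τ / g τ) 0 :=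
      Finset.single_le_sum (f := fun τ => max (r τ / g τ) 0)
        (fun τ _ => le_max_right _ _) (Finset.mem_Icc.mpr ⟨h1, h2⟩)
    rw [hMbig]; linarith
  have hMb0 : 0 ≤ Mbig := by
    rw [hMbig]
    have : 0 ≤ ∑ τ ∈ Finset.Icc 1 m, max (r τ / g τ) 0 :=
      Finset.sum_nonneg (fun τ _ => le_max_right _ _)
    linarith
  set Λ : ℕ → ℝ := fun i =>
    if h : (((Finset.Icc i m).filter (fun τ => w τ ≠ 0)).Nonempty) then
      ((Finset.Icc i m).filter (fun τ => w τ ≠ 0)).inf' h (fun τ => r τ / g τ)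
    else Mbig with hΛ
  have hΛval : ∀ i, ∀ (h : (((Finset.Icc i m).filter (fun τ => w τ ≠ 0)).Nonempty)),
      Λ i = ((Finset.Icc i m).filter (fun τ => w τ ≠ 0)).inf' h (fun τ => r τ / g τ) := by
    intro i h
    simp only [hΛ]
    exact dif_pos h
  have hΛnn : ∀ i, 1 ≤ i → 0 ≤ Λ i := by
    intro i h1
    simp only [hΛ]
    split_ifs with h
    · obtain ⟨τ, hτ, heq⟩ := Finset.exists_mem_eq_inf' h (fun τ => r τ / g τ)
      rw [heq]
      obtain ⟨hτI, _⟩ := Finset.mem_filter.mp hτ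
      obtain ⟨ha, hb⟩ := Finset.mem_Icc.mp hτI
      exact hρnn τ (le_trans h1 ha) hb
    · exact hMb0
  have hΛle : ∀ τ, 1 ≤ τ → τ ≤ m → w τ ≠ 0 → Λ τ ≤ r τ / g τ := by
    intro τ h1 h2 h3
    have hmem : τ ∈ (Finset.Icc τ m).filter (fun τ' => w τ' ≠ 0) :=
      Finset.mem_filter.mpr ⟨Finset.mem_Icc.mpr ⟨le_refl _, h2⟩, h3⟩
    rw [hΛval τ ⟨τ, hmem⟩]
    exact Finset.inf'_le _ hmem
  have hΛmono : ∀ i, 1 ≤ i → Λ i ≤ Λ (i + 1) := by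
    intro i hi1
    by_cases h2 : (((Finset.Icc (i+1) m).filter (fun τ => w τ ≠ 0)).Nonempty)
    · obtain ⟨τ, hτ, heq⟩ := Finset.exists_mem_eq_inf' h2 (fun τ => r τ / g τ)
      have hτ' : τ ∈ (Finset.Icc i m).filter (fun τ' => w τ' ≠ 0) := by
        obtain ⟨hI, hww⟩ := Finset.mem_filter.mp hτ
        obtain ⟨ha, hb⟩ := Finset.mem_Icc.mp hI
        exact Finset.mem_filter.mpr ⟨Finset.mem_Icc.mpr ⟨by omega, hb⟩, hww⟩
      rw [hΛval (i+1) h2, hΛval i ⟨τ, hτ'⟩, heq]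
      exact Finset.inf'_le _ hτ'
    · have hMeq : Λ (i+1) = Mbig := by simp only [hΛ]; exact dif_neg h2
      rw [hMeq]
      simp only [hΛ]
      split_ifs with h1
      · obtain ⟨τ, hτ, heq⟩ := Finset.exists_mem_eq_inf' h1 (fun τ => r τ / g τ)
        rw [heq]
        obtain ⟨hI, _⟩ := Finset.mem_filter.mp hτ
        obtain ⟨ha, hb⟩ := Finset.mem_Icc.mp hI
        exact hMb τ (by omega) hb
      · exact le_refl _
  -- the jobs of the nodes of `N` have `Λ (mty J) ≥ ρ z`
  have hΛlower : ∀ z ∈ N, ∀ J ∈ H m g r s z 𝒥, r z / g z ≤ Λ (mty m g s J) := by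
    intro z hz J hJ
    obtain ⟨hz1, hzm⟩ := hN1 z hz
    simp only [hΛ]
    split_ifs with h
    · obtain ⟨τ, hτ, heq⟩ := Finset.exists_mem_eq_inf' h (fun τ => r τ / g τ)
      rw [heq]
      obtain ⟨hI, hww⟩ := Finset.mem_filter.mp hτ
      obtain ⟨ha, hb⟩ := Finset.mem_Icc.mp hI
      have hJ𝒥 := H_subset hJ
      have h1 := (mty_spec hm (hsle J hJ𝒥)).1
      exact hrate z hz τ (by omega) hb hww J hJ ha
    · exact hMb z hz1 hzm
  -- the downward induction
  have hmty : ∀ J ∈ 𝒥, 1 ≤ mty m g s J ∧ mty m g s J ≤ m := by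
    intro J hJ
    have := mty_spec hm (hsle J hJ)
    exact ⟨this.1, this.2.1⟩
  have hDI : ∀ n i, 1 ≤ i → m + 1 ≤ i + n →
      ∑ J ∈ 𝒥.filter (fun J => i ≤ mty m g s J), s J * Λ (mty m g s J) +
        Λ i * ((∑ τ ∈ Finset.Icc i m, (w τ : ℝ) * g τ) -
          Ssum s (𝒥.filter (fun J => i ≤ mty m g s J))) ≤
      ∑ τ ∈ Finset.Icc i m, (w τ : ℝ) * g τ * (r τ / g τ) := by
    intro n
    induction n with
    | zero =>
      intro i h1 h2
      have hIcc : Finset.Icc i m = ∅ := by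
        rw [Finset.Icc_eq_empty_iff]
        omega
      have hfilt : 𝒥.filter (fun J => i ≤ mty m g s J) = ∅ := by
        apply Finset.filter_eq_empty_iff.mpr
        intro J hJ
        have := (hmty J hJ).2
        omega
      rw [hIcc, hfilt]
      simp [Ssum]
    | succ n ih =>
      intro i h1 h2
      by_cases him : m + 1 ≤ i
      · have hIcc : Finset.Icc i m = ∅ := by
          rw [Finset.Icc_eq_empty_iff]; omega
        have hfilt : 𝒥.filter (fun J => i ≤ mty m g s J) = ∅ := by
          apply Finset.filter_eq_empty_iff.mpr
          intro J hJ
          have := (hmty J hJ).2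
          omega
        rw [hIcc, hfilt]
        simp [Ssum]
      push_neg at him
      -- split the interval and the job filter at i
      have hIccsplit : Finset.Icc i m = insert i (Finset.Icc (i+1) m) := by
        ext τ
        simp only [Finset.mem_Icc, Finset.mem_insert]
        omega
      have hinotmem : i ∉ Finset.Icc (i+1) m := by
        simp only [Finset.mem_Icc]; omega
      have hfsplit : 𝒥.filter (fun J => i ≤ mty m g s J) =
          (𝒥.filter (fun J => mty m g s J = i)) ∪
          (𝒥.filter (fun J => i + 1 ≤ mty m g s J)) := by
        ext J
        simp only [Finset.mem_filter, Finset.mem_union]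
        constructor
        · rintro ⟨hJ, hle⟩
          rcases eq_or_lt_of_le hle with h0 | h0
          · exact Or.inl ⟨hJ, h0.symm⟩
          · exact Or.inr ⟨hJ, h0⟩
        · rintro (⟨hJ, h0⟩ | ⟨hJ, h0⟩)
          · exact ⟨hJ, by omega⟩
          · exact ⟨hJ, by omega⟩
      have hfdisj : Disjoint (𝒥.filter (fun J => mty m g s J = i))
          (𝒥.filter (fun J => i + 1 ≤ mty m g s J)) := by
        rw [Finset.disjoint_left]
        intro J hJ1 hJ2
        have h1 := (Finset.mem_filter.mp hJ1).2
        have h2 := (Finset.mem_filter.mp hJ2).2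
        omega
      have hsum1 : ∑ J ∈ 𝒥.filter (fun J => i ≤ mty m g s J), s J * Λ (mty m g s J) =
          (∑ J ∈ 𝒥.filter (fun J => mty m g s J = i), s J) * Λ i +
          ∑ J ∈ 𝒥.filter (fun J => i + 1 ≤ mty m g s J), s J * Λ (mty m g s J) := by
        rw [hfsplit, Finset.sum_union hfdisj, Finset.sum_mul]
        congr 1
        apply Finset.sum_congr rfl
        intro J hJ
        have := (Finset.mem_filter.mp hJ).2
        rw [this]
      have hsum2 : Ssum s (𝒥.filter (fun J => i ≤ mty m g s J)) =
          (∑ J ∈ 𝒥.filter (fun J => mty m g s J = i), s J) +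
          Ssum s (𝒥.filter (fun J => i + 1 ≤ mty m g s J)) := by
        rw [Ssum, hfsplit, Finset.sum_union hfdisj]
        rfl
      have hIccsum1 : ∑ τ ∈ Finset.Icc i m, (w τ : ℝ) * g τ =
          (w i : ℝ) * g i + ∑ τ ∈ Finset.Icc (i+1) m, (w τ : ℝ) * g τ := by
        rw [hIccsplit, Finset.sum_insert hinotmem]
      have hIccsum2 : ∑ τ ∈ Finset.Icc i m, (w τ : ℝ) * g τ * (r τ / g τ) =
          (w i : ℝ) * g i * (r i / g i) +
          ∑ τ ∈ Finset.Icc (i+1) m, (w τ : ℝ) * g τ * (r τ / g τ) := by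
        rw [hIccsplit, Finset.sum_insert hinotmem]
      have ihs := ih (i+1) (by omega) (by omega)
      -- slack at level i+1 is nonnegative
      have hslack : 0 ≤ (∑ τ ∈ Finset.Icc (i+1) m, (w τ : ℝ) * g τ) -
          Ssum s (𝒥.filter (fun J => i + 1 ≤ mty m g s J)) := by
        by_cases him2 : i + 1 ≤ m
        · have := hw (i+1) (by omega) him2
          linarith
        · have hIcc : Finset.Icc (i+1) m = ∅ := by
            rw [Finset.Icc_eq_empty_iff]; omega
          have hfilt : 𝒥.filter (fun J => i + 1 ≤ mty m g s J) = ∅ := by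
            apply Finset.filter_eq_empty_iff.mpr
            intro J hJ
            have := (hmty J hJ).2
            omega
          rw [hIcc, hfilt]
          simp [Ssum]
      have hwiΛ : (w i : ℝ) * g i * Λ i ≤ (w i : ℝ) * g i * (r i / g i) := by
        by_cases hwi : w i = 0
        · rw [hwi]; simp
        · apply mul_le_mul_of_nonneg_left (hΛle i h1 (by omega) hwi)
          have := g_pos hg1 hg h1 (by omega)
          positivity
      have hmonoslack : Λ i * ((∑ τ ∈ Finset.Icc (i+1) m, (w τ : ℝ) * g τ) -
          Ssum s (𝒥.filter (fun J => i + 1 ≤ mty m g s J))) ≤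
          Λ (i+1) * ((∑ τ ∈ Finset.Icc (i+1) m, (w τ : ℝ) * g τ) -
          Ssum s (𝒥.filter (fun J => i + 1 ≤ mty m g s J))) :=
        mul_le_mul_of_nonneg_right (hΛmono i h1) hslack
      rw [hsum1, hsum2, hIccsum1, hIccsum2]
      nlinarith [hwiΛ, hmonoslack, ihs]
  -- conclude
  have hfilt1 : 𝒥.filter (fun J => 1 ≤ mty m g s J) = 𝒥 := by
    apply Finset.filter_true_of_mem
    intro J hJ
    exact (hmty J hJ).1
  have hDI1 := hDI (m + 1) 1 (le_refl _) (by omega)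
  rw [hfilt1] at hDI1
  have hcost : cost m r w = ∑ τ ∈ Finset.Icc 1 m, (w τ : ℝ) * g τ * (r τ / g τ) := by
    unfold cost
    apply Finset.sum_congr rfl
    intro τ hτ
    obtain ⟨h1, h2⟩ := Finset.mem_Icc.mp hτ
    have := g_pos hg1 hg h1 h2
    field_simp
  have hslack1 : 0 ≤ (∑ τ ∈ Finset.Icc 1 m, (w τ : ℝ) * g τ) - Ssum s 𝒥 := by
    have := hw 1 (le_refl _) hm
    rw [hfilt1] at this
    linarith
  have hfinal : ∑ z ∈ N, SH m g r s 𝒥 z * (r z / g z) ≤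
      ∑ J ∈ 𝒥, s J * Λ (mty m g s J) := by
    classical
    set U := N.biUnion (fun z => H m g r s z 𝒥) with hU
    have hstep1 : ∑ z ∈ N, SH m g r s 𝒥 z * (r z / g z) ≤
        ∑ z ∈ N, ∑ J ∈ H m g r s z 𝒥, s J * Λ (mty m g s J) := by
      apply Finset.sum_le_sum
      intro z hz
      rw [SH, Ssum, Finset.sum_mul]
      apply Finset.sum_le_sum
      intro J hJ
      have hJ𝒥 := H_subset hJ
      exact mul_le_mul_of_nonneg_left (hΛlower z hz J hJ) (hsnn J hJ𝒥)
    have hstep2 : ∑ z ∈ N, ∑ J ∈ H m g r s z 𝒥, s J * Λ (mty m g s J) =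
        ∑ J ∈ U, s J * Λ (mty m g s J) := (Finset.sum_biUnion hNdisj).symm
    have hstep3 : ∑ J ∈ U, s J * Λ (mty m g s J) ≤
        ∑ J ∈ 𝒥, s J * Λ (mty m g s J) := by
      apply Finset.sum_le_sum_of_subset_of_nonneg
      · intro J hJ
        rw [hU, Finset.mem_biUnion] at hJ
        obtain ⟨z, _, hJz⟩ := hJ
        exact H_subset hJz
      · intro J hJ𝒥 _
        have h1 := (hmty J hJ𝒥).1
        exact mul_nonneg (hsnn J hJ𝒥) (hΛnn _ h1)
    linarith
  have hΛ1nn := hΛnn 1 (le_refl _)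
  rw [hcost]
  nlinarith [hDI1, hfinal, mul_nonneg hΛ1nn hslack1]

end DualLB
section Rate
variable {m : ℕ} {g r : ℕ → ℝ}

lemma rate_le {x z τ : ℕ} (hzP : z ∈ P m g r x) (hτm : τ ≤ m)
    (hp : pdef m g r z → τ < p m g r z) (hxτ : x ≤ τ) :
    r z / g z ≤ r τ / g τ := by
  induction hzP using Relation.ReflTransGen.head_induction_on with
  | refl => exact no_beat hxτ hτm hp
  | @head a b hstep htail ih =>
    by_cases hbτ : b ≤ τ
    · exact ih hbτ
    · push_neg at hbτ
      have h1 : r a / g a ≤ r τ / g τ := by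
        apply no_beat hxτ hτm
        intro _
        rw [← hstep.2]
        exact hbτ
      have h2 : r z / g z ≤ r a / g a :=
        rho_anti (Relation.ReflTransGen.head hstep htail)
      linarith

lemma T_p_gt {k z : ℕ} (hz : z ∈ T m g r k) (hd : pdef m g r z) :
    k < p m g r z := by
  rcases mem_T_iff.mp hz with h0 | ⟨x, hxP, hzy⟩
  · exact h0 ▸ lt_p hd
  · have hpz := hzy.2.2.2
    have hdx : pdef m g r x :=
      pdef_iff_p_ne_zero.mpr (hpz ▸ pdef_iff_p_ne_zero.mp hd)
    have h1 := lt_p hdx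
    have h2 := P_le hxP
    omega

lemma T_p_ge {k z : ℕ} (hz : z ∈ T m g r k) (hd : pdef m g r z)
    (hdk : pdef m g r k) : p m g r k ≤ p m g r z := by
  rcases mem_T_iff.mp hz with h0 | ⟨x, hxP, hzy⟩
  · rw [h0]
  · have hpz := hzy.2.2.2
    have hdx : pdef m g r x :=
      pdef_iff_p_ne_zero.mpr (hpz ▸ pdef_iff_p_ne_zero.mp hd)
    rcases mem_P_cases hxP with h0 | ⟨_, h1⟩
    · rw [hpz, h0]
    · have h2 := P_le h1
      have h3 := lt_p hdx
      omega

end Rate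
/-- Setting `C := ∑_{z ∈ T(z⋄)} cn_{z⋄}(z)·r z`, the optimal
one-shot scheduling cost satisfies `(7/15)·C ≤ OPT1(𝒥) ≤ (8/7)·C`. -/
theorem statement_10 {ι : Type*} (m : ℕ) (g r : ℕ → ℝ) (s : ι → ℝ) (𝒥 : Finset ι)
    (hm : 1 ≤ m)
    (hg1 : 0 < g 1) (hr1 : 0 < r 1)
    (hg : ∀ i j, 1 ≤ i → i < j → j ≤ m → g i < g j)
    (hr : ∀ i j, 1 ≤ i → i < j → j ≤ m → r i < r j)
    (hr8 : ∀ z, 1 ≤ z → z ≤ m → ∃ n : ℤ, r z = (8 : ℝ) ^ n)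
    (hJ : 𝒥.Nonempty)
    (hs : ∀ J ∈ 𝒥, 0 < s J ∧ s J ≤ g m) :
    7 / 15 * (∑ z ∈ TIcc m g r (zdia m g r s 𝒥),
        cn m g r s 𝒥 (zdia m g r s 𝒥) z * r z)
      ≤ OPT1 m g r s 𝒥 ∧
    OPT1 m g r s 𝒥
      ≤ 8 / 7 * (∑ z ∈ TIcc m g r (zdia m g r s 𝒥),
          cn m g r s 𝒥 (zdia m g r s 𝒥) z * r z) := by
  classical
  have hsnn : ∀ J ∈ 𝒥, 0 ≤ s J := fun J hJ' => le_of_lt (hs J hJ').1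
  have hsle : ∀ J ∈ 𝒥, s J ≤ g m := fun J hJ' => (hs J hJ').2
  set k0 := k0f m g s 𝒥 with hk0def
  set zd := zdia m g r s 𝒥 with hzddef
  have hk0m : k0 ≤ m := k0_le_m hm hsle
  have hk01 : 1 ≤ k0 := k0_pos hm hJ hsle
  obtain ⟨hzdP, hzddec⟩ := zdia_spec (m := m) (g := g) (r := r) hk01 hk0m
  have hzdk0 : k0 ≤ zd := P_le hzdP
  have hzdm : zd ≤ m := P_le_m hk0m hzdP
  have hzd1 : 1 ≤ zd := by omega
  set C := ∑ z ∈ TIcc m g r zd, cn m g r s 𝒥 zd z * r z with hC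
  obtain ⟨J0, hJ0m, hJ0k⟩ := exists_k0 (m := m) (g := g) hJ
  have hJ0A : mty m g s J0 ∈ A m g r zd := by
    rw [← hJ0k]
    exact ⟨hk01, hk0m, hzdP⟩
  have hJ0H : J0 ∈ H m g r s zd 𝒥 := Finset.mem_filter.mpr ⟨hJ0m, hJ0A⟩
  have hSHpos : 0 < SH m g r s 𝒥 zd :=
    lt_of_lt_of_le (hs J0 hJ0m).1
      (Finset.single_le_sum (fun J hJ' => hsnn J (H_subset hJ')) hJ0H)
  have hgzd : 0 < g zd := g_pos hg1 hg hzd1 hzdm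
  have hrzd : 0 < r zd := r_pos hr1 hr hzd1 hzdm
  have hcn1 : (1 : ℝ) ≤ cn m g r s 𝒥 zd zd := by
    rw [cn_at_zs]
    have hpos : 0 < ⌈SH m g r s 𝒥 zd / g zd⌉₊ :=
      Nat.ceil_pos.mpr (by positivity)
    exact_mod_cast hpos
  have hzdT : zd ∈ T m g r zd := mem_T_iff.mpr (Or.inl rfl)
  have hzdTIcc : zd ∈ TIcc m g r zd := (mem_TIcc_iff hzd1 hzdm).mpr hzdT
  have hTIb : ∀ z ∈ TIcc m g r zd, 1 ≤ z ∧ z ≤ m := fun z hz =>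
    T_bounds hzd1 hzdm ((mem_TIcc_iff hzd1 hzdm).mp hz)
  have hterm_nn : ∀ z ∈ TIcc m g r zd, 0 ≤ cn m g r s 𝒥 zd z * r z := by
    intro z hz
    obtain ⟨h1, h2⟩ := hTIb z hz
    exact mul_nonneg (cn_nonneg hg1 hg hsnn hzd1 hzdm z)
      (le_of_lt (r_pos hr1 hr h1 h2))
  have hCge : r zd ≤ C := by
    have h1 : cn m g r s 𝒥 zd zd * r zd ≤ C :=
      Finset.single_le_sum hterm_nn hzdTIcc
    nlinarith
  have hCnn : 0 ≤ C := le_trans (le_of_lt hrzd) hCge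
  -- the rounded configuration
  set w : ℕ → ℕ :=
    fun τ => if τ ∈ TIcc m g r zd then ⌈cn m g r s 𝒥 zd τ⌉₊ else 0 with hwdef
  have hfiltIcc : ∀ i : ℕ,
      (Finset.Icc i m).filter (fun τ => τ ∈ TIcc m g r zd) =
      (TIcc m g r zd).filter (fun z => i ≤ z) := by
    intro i
    ext τ
    simp only [Finset.mem_filter, Finset.mem_Icc]
    constructor
    · rintro ⟨⟨h1, _⟩, h2⟩
      exact ⟨h2, h1⟩
    · rintro ⟨h1, h2⟩
      obtain ⟨ha, hb⟩ := hTIb τ h1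
      exact ⟨⟨h2, hb⟩, h1⟩
  have hwsum : ∀ (i : ℕ) (f : ℕ → ℝ),
      ∑ τ ∈ Finset.Icc i m, (w τ : ℝ) * f τ =
      ∑ τ ∈ (TIcc m g r zd).filter (fun z => i ≤ z),
        (⌈cn m g r s 𝒥 zd τ⌉₊ : ℝ) * f τ := by
    intro i f
    rw [← hfiltIcc i, Finset.sum_filter]
    apply Finset.sum_congr rfl
    intro τ _
    by_cases hτ : τ ∈ TIcc m g r zd
    · rw [if_pos hτ, hwdef]
      simp only [if_pos hτ]
    · rw [if_neg hτ, hwdef]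
      simp only [if_neg hτ]
      norm_num
  have hwfeas : Feasible m g s 𝒥 w := by
    intro i hi1 him
    calc Ssum s (𝒥.filter (fun J => i ≤ mty m g s J))
        ≤ ∑ z ∈ (TIcc m g r zd).filter (fun z => i ≤ z), SH m g r s 𝒥 z :=
          V_le_SH hm hsnn hsle hzd1 hzdm hzdk0 i
      _ ≤ ∑ z ∈ (TIcc m g r zd).filter (fun z => i ≤ z),
            cn m g r s 𝒥 zd z * g z := cn_capacity hg1 hg hsnn hzd1 hzdm i
      _ ≤ ∑ z ∈ (TIcc m g r zd).filter (fun z => i ≤ z),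
            (⌈cn m g r s 𝒥 zd z⌉₊ : ℝ) * g z := by
          apply Finset.sum_le_sum
          intro z hz
          obtain ⟨h1, h2⟩ := hTIb z (Finset.mem_filter.mp hz).1
          exact mul_le_mul_of_nonneg_right (Nat.le_ceil _)
            (le_of_lt (g_pos hg1 hg h1 h2))
      _ = ∑ τ ∈ Finset.Icc i m, (w τ : ℝ) * g τ := (hwsum i g).symm
  -- cost of the rounded configuration
  have hTfull : (TIcc m g r zd).filter (fun z => 1 ≤ z) = TIcc m g r zd :=
    Finset.filter_true_of_mem (fun z hz => (hTIb z hz).1)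
  have hcostw : cost m r w ≤ 8 / 7 * C := by
    have h1 : cost m r w =
        ∑ τ ∈ TIcc m g r zd, (⌈cn m g r s 𝒥 zd τ⌉₊ : ℝ) * r τ := by
      rw [cost, hwsum 1 r, hTfull]
    have hceil : ∀ τ ∈ TIcc m g r zd,
        (⌈cn m g r s 𝒥 zd τ⌉₊ : ℝ) * r τ ≤ cn m g r s 𝒥 zd τ * r τ +
          (if τ ≠ zd ∧ cn m g r s 𝒥 zd τ ≠ 0 then r τ else 0) := by
      intro τ hτ
      obtain ⟨ha, hb⟩ := hTIb τ hτ
      have hrτ := r_pos hr1 hr ha hb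
      by_cases h2 : τ = zd
      · subst h2
        rw [if_neg (by simp), cn_at_zs, Nat.ceil_natCast]
        simp
      by_cases h3 : cn m g r s 𝒥 zd τ = 0
      · rw [h3, if_neg (by simp [h3])]
        simp
      · rw [if_pos ⟨h2, h3⟩]
        have hcnn := cn_nonneg (r := r) hg1 hg hsnn hzd1 hzdm τ
        have : (⌈cn m g r s 𝒥 zd τ⌉₊ : ℝ) ≤ cn m g r s 𝒥 zd τ + 1 :=
          le_of_lt (Nat.ceil_lt_add_one hcnn)
        nlinarith
    have h4 : ∑ τ ∈ TIcc m g r zd, (⌈cn m g r s 𝒥 zd τ⌉₊ : ℝ) * r τ ≤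
        C + ∑ τ ∈ TIcc m g r zd,
          (if τ ≠ zd ∧ cn m g r s 𝒥 zd τ ≠ 0 then r τ else 0) := by
      rw [hC, ← Finset.sum_add_distrib]
      exact Finset.sum_le_sum hceil
    have h5 : ∑ τ ∈ TIcc m g r zd,
        (if τ ≠ zd ∧ cn m g r s 𝒥 zd τ ≠ 0 then r τ else 0) =
        ∑ τ ∈ (TIcc m g r zd).filter
          (fun τ => τ ≠ zd ∧ cn m g r s 𝒥 zd τ ≠ 0), r τ :=
      (Finset.sum_filter _ _).symm
    have h6 : ∑ τ ∈ (TIcc m g r zd).filter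
        (fun τ => τ ≠ zd ∧ cn m g r s 𝒥 zd τ ≠ 0), r τ ≤ r zd / 7 := by
      apply geo_sum hr1 hr hr8 hzd1 hzdm
      intro z hz
      obtain ⟨hzT, hzne, _⟩ := Finset.mem_filter.mp hz
      obtain ⟨ha, hb⟩ := hTIb z hzT
      exact ⟨ha, hb, T_below hzd1 hzdm ((mem_TIcc_iff hzd1 hzdm).mp hzT) hzne⟩
    rw [h1]
    linarith
  -- OPT1 basic facts
  have hmem : cost m r w ∈
      {c : ℝ | ∃ w', Feasible m g s 𝒥 w' ∧ c = cost m r w'} :=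
    ⟨w, hwfeas, rfl⟩
  have hcost_nn : ∀ w' : ℕ → ℕ, 0 ≤ cost m r w' := by
    intro w'
    apply Finset.sum_nonneg
    intro τ hτ
    obtain ⟨h1, h2⟩ := Finset.mem_Icc.mp hτ
    exact mul_nonneg (Nat.cast_nonneg _) (le_of_lt (r_pos hr1 hr h1 h2))
  have hbdd : BddBelow {c : ℝ | ∃ w', Feasible m g s 𝒥 w' ∧ c = cost m r w'} := by
    refine ⟨0, ?_⟩
    rintro c ⟨w', _, rfl⟩
    exact hcost_nn w'
  constructor
  · -- lower bound
    rw [OPT1]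
    apply le_csInf ⟨cost m r w, hmem⟩
    rintro b ⟨w', hw', rfl⟩
    have hbnn := hcost_nn w'
    -- the maximal used machine type
    set used := (Finset.Icc 1 m).filter (fun τ => w' τ ≠ 0) with hused
    have hVk0 : 0 < Ssum s (𝒥.filter (fun J => k0 ≤ mty m g s J)) := by
      have hJ0f : J0 ∈ 𝒥.filter (fun J => k0 ≤ mty m g s J) :=
        Finset.mem_filter.mpr ⟨hJ0m, le_of_eq hJ0k⟩
      exact lt_of_lt_of_le (hs J0 hJ0m).1
        (Finset.single_le_sum
          (fun J hJ' => hsnn J (Finset.mem_of_mem_filter J hJ')) hJ0f)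
    have hWk0 : 0 < ∑ τ ∈ Finset.Icc k0 m, (w' τ : ℝ) * g τ :=
      lt_of_lt_of_le hVk0 (hw' k0 hk01 hk0m)
    have hexused : ∃ τ ∈ Finset.Icc k0 m, w' τ ≠ 0 := by
      by_contra hcon
      push_neg at hcon
      have : ∑ τ ∈ Finset.Icc k0 m, (w' τ : ℝ) * g τ = 0 := by
        apply Finset.sum_eq_zero
        intro τ hτ
        rw [hcon τ hτ]
        norm_num
      rw [this] at hWk0
      exact lt_irrefl _ hWk0
    obtain ⟨τ0, hτ0I, hτ0w⟩ := hexused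
    obtain ⟨hτ0a, hτ0b⟩ := Finset.mem_Icc.mp hτ0I
    have hτ0used : τ0 ∈ used :=
      Finset.mem_filter.mpr ⟨Finset.mem_Icc.mpr ⟨by omega, hτ0b⟩, hτ0w⟩
    have husedne : used.Nonempty := ⟨τ0, hτ0used⟩
    set τmax := used.max' husedne with hτmaxdef
    have hτmaxmem : τmax ∈ used := used.max'_mem husedne
    obtain ⟨hτmaxI, hτmaxw⟩ := Finset.mem_filter.mp hτmaxmem
    obtain ⟨hτmax1, hτmaxm⟩ := Finset.mem_Icc.mp hτmaxI
    have hτmaxk0 : k0 ≤ τmax := le_trans hτ0a (used.le_max' τ0 hτ0used)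
    have hub : ∀ τ, 1 ≤ τ → τ ≤ m → w' τ ≠ 0 → τ ≤ τmax := by
      intro τ h1 h2 h3
      exact used.le_max' τ (Finset.mem_filter.mpr ⟨Finset.mem_Icc.mpr ⟨h1, h2⟩, h3⟩)
    have hcostr : ∀ c, 1 ≤ c → c ≤ τmax → r c ≤ cost m r w' := by
      intro c h1 h2
      have h3 : r c ≤ r τmax := r_mono hr h1 h2 hτmaxm
      have h4 : (1 : ℝ) ≤ (w' τmax : ℝ) := by
        have : 1 ≤ w' τmax := Nat.one_le_iff_ne_zero.mpr hτmaxw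
        exact_mod_cast this
      have h5 : r τmax ≤ (w' τmax : ℝ) * r τmax := by
        nlinarith [r_pos hr1 hr hτmax1 hτmaxm]
      have h6 : (w' τmax : ℝ) * r τmax ≤ cost m r w' := by
        apply Finset.single_le_sum (f := fun τ => (w' τ : ℝ) * r τ)
        · intro τ hτ
          obtain ⟨ha, hb⟩ := Finset.mem_Icc.mp hτ
          exact mul_nonneg (Nat.cast_nonneg _) (le_of_lt (r_pos hr1 hr ha hb))
        · exact hτmaxI
      linarith
    -- generic dual-LB application helper
    have hLB : ∀ (k : ℕ), 1 ≤ k → k ≤ m → ∀ (N : Finset ℕ),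
        (∀ z ∈ N, z ∈ T m g r k) →
        (∀ z ∈ N, pdef m g r z → τmax < p m g r z) →
        ∑ z ∈ N, SH m g r s 𝒥 z * (r z / g z) ≤ cost m r w' := by
      intro k hk1 hkm N hNT hNp
      apply dual_LB hm hg1 hr1 hg hr hsnn hsle hw'
      · intro z hz
        exact T_bounds hk1 hkm (hNT z hz)
      · intro x hx y hy hxy
        exact H_disj hk1 hkm (hNT x hx) (hNT y hy) hxy
      · intro z hz τ hτ1 hτm hτw J hJH hmtyτ
        have hzP : z ∈ P m g r (mty m g s J) :=
          ((Finset.mem_filter.mp hJH).2).2.2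
        apply rate_le hzP hτm _ hmtyτ
        intro hd
        exact lt_of_le_of_lt (hub τ hτ1 hτm hτw) (hNp z hz hd)
    by_cases hcase : zd ≤ τmax
    · -- Case 1 : some machine at or above z⋄ is used
      set Pd := (Finset.Icc 1 m).filter
        (fun c => c ∈ P m g r zd ∧ c ≤ τmax) with hPd
      have hzdPd : zd ∈ Pd := by
        simp only [hPd, Finset.mem_filter, Finset.mem_Icc]
        exact ⟨⟨hzd1, hzdm⟩, Relation.ReflTransGen.refl, hcase⟩
      have hPdne : Pd.Nonempty := ⟨zd, hzdPd⟩
      set cstar := Pd.max' hPdne with hcstardef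
      have hcsmem : cstar ∈ Pd := Pd.max'_mem hPdne
      simp only [hPd, Finset.mem_filter, Finset.mem_Icc] at hcsmem
      obtain ⟨⟨hcs1, hcsm⟩, hcsP, hcsτ⟩ := hcsmem
      have hcub : ∀ c ∈ P m g r zd, c ≤ τmax → c ≤ cstar := by
        intro c hc1 hc2
        apply Pd.le_max'
        simp only [hPd, Finset.mem_filter, Finset.mem_Icc]
        exact ⟨⟨P_one_le hzd1 hc1, P_le_m hzdm hc1⟩, hc1, hc2⟩
      have hzdA : zd ∈ A m g r cstar := ⟨hzd1, hzdm, hcsP⟩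
      set rest := (TIcc m g r zd).filter (fun z => ¬ z ∈ A m g r cstar)
        with hrest
      have hrestT : ∀ z ∈ rest, z ∈ T m g r zd := by
        intro z hz
        exact (mem_TIcc_iff hzd1 hzdm).mp (Finset.mem_filter.mp hz).1
      have hrestne : ∀ z ∈ rest, z ≠ zd := by
        intro z hz h0
        exact (Finset.mem_filter.mp hz).2 (h0 ▸ hzdA)
      have hCsplit : C = (∑ z ∈ (TIcc m g r zd).filter
            (fun z => z ∈ A m g r cstar), cn m g r s 𝒥 zd z * r z) +
          ∑ z ∈ rest, cn m g r s 𝒥 zd z * r z := by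
        rw [hC, hrest]
        exact (Finset.sum_filter_add_sum_filter_not _ _ _).symm
      have hrest1 : ∑ z ∈ rest, cn m g r s 𝒥 zd z * r z ≤
          ∑ z ∈ rest, SH m g r s 𝒥 z * (r z / g z) := by
        apply Finset.sum_le_sum
        intro z hz
        obtain ⟨ha, hb⟩ := hTIb z (Finset.mem_filter.mp hz).1
        exact cn_mul_r_le hg1 hg hsnn hzd1 hzdm (hrestT z hz) (hrestne z hz)
          (le_of_lt (r_pos hr1 hr ha hb))
      have hrestp : ∀ z ∈ rest, pdef m g r z → τmax < p m g r z := by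
        intro z hz hd
        by_contra hcon
        push_neg at hcon
        rcases mem_T_iff.mp (hrestT z hz) with h0 | ⟨x, hxP, hzy⟩
        · exact (hrestne z hz) h0
        · have hpz := hzy.2.2.2
          have hdx : pdef m g r x :=
            pdef_iff_p_ne_zero.mpr (hpz ▸ pdef_iff_p_ne_zero.mp hd)
          have hpxP : p m g r x ∈ P m g r zd := P_trans hxP (mem_P_step hdx)
          have hpxτ : p m g r x ≤ τmax := by rw [← hpz]; exact hcon
          have hpxcs : p m g r x ≤ cstar := hcub _ hpxP hpxτ
          have hcsPpx : cstar ∈ P m g r (p m g r x) :=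
            P_comparable hpxP hcsP hpxcs
          have hcsPz : cstar ∈ P m g r z := by
            have h9 : cstar ∈ P m g r (p m g r z) := by
              rw [hpz]
              exact hcsPpx
            exact Relation.ReflTransGen.head ⟨hd, rfl⟩ h9
          obtain ⟨hz1, hz2⟩ := hTIb z (Finset.mem_filter.mp hz).1
          exact (Finset.mem_filter.mp hz).2 ⟨hz1, hz2, hcsPz⟩
      by_cases hcz : cstar = zd
      · -- the top used chain element is z⋄ itself
        have hAset : (TIcc m g r zd).filter (fun z => z ∈ A m g r cstar) =
            {zd} := by
          ext z
          simp only [Finset.mem_filter, Finset.mem_singleton]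
          constructor
          · rintro ⟨hzT, hzA⟩
            have h0 : zd ∈ P m g r z := by rw [← hcz]; exact hzA.2.2
            exact (T_P_eq hzd1 hzdm ((mem_TIcc_iff hzd1 hzdm).mp hzT) hzdT h0).symm
          · rintro rfl
            exact ⟨hzdTIcc, hcz ▸ hzdA⟩
        have hbound1 : (∑ z ∈ (TIcc m g r zd).filter
            (fun z => z ∈ A m g r cstar), cn m g r s 𝒥 zd z * r z) ≤
            SH m g r s 𝒥 zd * (r zd / g zd) + r zd := by
          rw [hAset, Finset.sum_singleton]
          exact cn_zs_r_ub hg1 hg hzd1 hzdm (le_of_lt hrzd) (le_of_lt hSHpos)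
        have hzdrest : zd ∉ rest := by
          intro h0
          exact (hrestne zd h0) rfl
        have hzdp : pdef m g r zd → τmax < p m g r zd := by
          intro hd
          by_contra hcon
          push_neg at hcon
          have h1 : p m g r zd ∈ P m g r zd := mem_P_step hd
          have h2 := hcub _ h1 hcon
          have h3 := lt_p hd
          omega
        have hLB1 : SH m g r s 𝒥 zd * (r zd / g zd) +
            ∑ z ∈ rest, SH m g r s 𝒥 z * (r z / g z) ≤ cost m r w' := by
          have := hLB zd hzd1 hzdm (insert zd rest)
            (by
              intro z hz
              rcases Finset.mem_insert.mp hz with h0 | h0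
              · exact h0 ▸ hzdT
              · exact hrestT z h0)
            (by
              intro z hz
              rcases Finset.mem_insert.mp hz with h0 | h0
              · exact h0 ▸ hzdp
              · exact hrestp z h0)
          rwa [Finset.sum_insert hzdrest] at this
        have hrcs : r cstar ≤ cost m r w' := hcostr cstar hcs1 hcsτ
        rw [hcz] at hrcs
        linarith [hCsplit, hbound1, hrest1, hLB1]
      · -- the top used chain element is a strict ancestor : decentness applies
        have hbound1 : (∑ z ∈ (TIcc m g r zd).filter
            (fun z => z ∈ A m g r cstar), cn m g r s 𝒥 zd z * r z) ≤ r cstar :=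
          hzddec cstar hcsP hcz
        have hLB1 : ∑ z ∈ rest, SH m g r s 𝒥 z * (r z / g z) ≤ cost m r w' :=
          hLB zd hzd1 hzdm rest hrestT hrestp
        have hrcs : r cstar ≤ cost m r w' := hcostr cstar hcs1 hcsτ
        linarith [hCsplit, hbound1, hrest1, hLB1]
    · -- Case 2 : all machines are strictly below z⋄
      push_neg at hcase
      have hzdk0' : k0 ≠ zd := by omega
      obtain h0 | ⟨z', hz'P, hz'step⟩ := Relation.ReflTransGen.cases_tail hzdP
      · exact absurd h0.symm hzdk0'
      have hdz' : pdef m g r z' := hz'step.1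
      have hpz' : p m g r z' = zd := hz'step.2.symm
      have hz'zd : z' < zd := by
        have := lt_p hdz'
        omega
      have hz'1 : 1 ≤ z' := P_one_le hk01 hz'P
      have hz'm : z' ≤ m := by omega
      have hndz' : ¬ decent m g r s 𝒥 z' := by
        intro hd
        have := zdia_min hz'P hd
        omega
      rw [decent] at hndz'
      push_neg at hndz'
      obtain ⟨zt, hztP, hztne, hviol⟩ := hndz'
      have hztPzd : zt ∈ P m g r zd := by
        rcases mem_P_cases hztP with h0 | ⟨_, h1⟩
        · exact absurd h0 hztne
        · rw [hpz'] at h1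
          exact h1
      have hztzd : zd ≤ zt := P_le hztPzd
      have hztm : zt ≤ m := P_le_m hzdm hztPzd
      have hrzt : r zd ≤ r zt := r_mono hr hzd1 hztzd hztm
      have hrz8 : 8 * r z' ≤ r zd :=
        pow8_le (hr8 z' hz'1 hz'm) (hr8 zd hzd1 hzdm) (hr z' zd hz'1 hz'zd hzdm)
      set region := (TIcc m g r z').filter (fun z => z ∈ A m g r zt)
        with hregion
      have hz'T : z' ∈ T m g r z' := mem_T_iff.mpr (Or.inl rfl)
      have hz'reg : z' ∈ region := by
        rw [hregion, Finset.mem_filter]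
        exact ⟨(mem_TIcc_iff hz'1 hz'm).mpr hz'T, ⟨hz'1, hz'm, hztP⟩⟩
      have hregT : ∀ z ∈ region, z ∈ T m g r z' := by
        intro z hz
        exact (mem_TIcc_iff hz'1 hz'm).mp (Finset.mem_filter.mp hz).1
      have hregSH : r zt - r z' ≤
          ∑ z ∈ region, SH m g r s 𝒥 z * (r z / g z) := by
        have e1 : ∑ z ∈ region, cn m g r s 𝒥 z' z * r z =
            cn m g r s 𝒥 z' z' * r z' +
            ∑ z ∈ region.erase z', cn m g r s 𝒥 z' z * r z :=
          (Finset.add_sum_erase region _ hz'reg).symm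
        have e2 : ∑ z ∈ region, SH m g r s 𝒥 z * (r z / g z) =
            SH m g r s 𝒥 z' * (r z' / g z') +
            ∑ z ∈ region.erase z', SH m g r s 𝒥 z * (r z / g z) :=
          (Finset.add_sum_erase region _ hz'reg).symm
        have e3 : cn m g r s 𝒥 z' z' * r z' ≤
            SH m g r s 𝒥 z' * (r z' / g z') + r z' :=
          cn_zs_r_ub hg1 hg hz'1 hz'm (le_of_lt (r_pos hr1 hr hz'1 hz'm))
            (SH_nonneg hsnn)
        have e4 : ∑ z ∈ region.erase z', cn m g r s 𝒥 z' z * r z ≤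
            ∑ z ∈ region.erase z', SH m g r s 𝒥 z * (r z / g z) := by
          apply Finset.sum_le_sum
          intro z hz
          have hzreg := Finset.mem_of_mem_erase hz
          have hzne := Finset.ne_of_mem_erase hz
          obtain ⟨ha, hb⟩ := T_bounds hz'1 hz'm (hregT z hzreg)
          exact cn_mul_r_le hg1 hg hsnn hz'1 hz'm (hregT z hzreg) hzne
            (le_of_lt (r_pos hr1 hr ha hb))
        rw [hregion] at e1 e2 ⊢
        rw [e2]
        have := hviol
        rw [e1] at this
        linarith
      have hLB1 : ∑ z ∈ region, SH m g r s 𝒥 z * (r z / g z) ≤ cost m r w' := by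
        apply hLB z' hz'1 hz'm region hregT
        intro z hz hd
        have h1 : p m g r z' ≤ p m g r z := T_p_ge (hregT z hz) hd hdz'
        rw [hpz'] at h1
        omega
      have hLB2 : ∑ z ∈ TIcc m g r zd, SH m g r s 𝒥 z * (r z / g z) ≤
          cost m r w' := by
        apply hLB zd hzd1 hzdm (TIcc m g r zd)
          (fun z hz => (mem_TIcc_iff hzd1 hzdm).mp hz)
        intro z hz hd
        have := T_p_gt ((mem_TIcc_iff hzd1 hzdm).mp hz) hd
        omega
      have hCb : C ≤ r zd + ∑ z ∈ TIcc m g r zd, SH m g r s 𝒥 z * (r z / g z) := by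
        have e1 : C = cn m g r s 𝒥 zd zd * r zd +
            ∑ z ∈ (TIcc m g r zd).erase zd, cn m g r s 𝒥 zd z * r z := by
          rw [hC]
          exact (Finset.add_sum_erase _ _ hzdTIcc).symm
        have e2 : ∑ z ∈ TIcc m g r zd, SH m g r s 𝒥 z * (r z / g z) =
            SH m g r s 𝒥 zd * (r zd / g zd) +
            ∑ z ∈ (TIcc m g r zd).erase zd, SH m g r s 𝒥 z * (r z / g z) :=
          (Finset.add_sum_erase _ _ hzdTIcc).symm
        have e3 : cn m g r s 𝒥 zd zd * r zd ≤
            SH m g r s 𝒥 zd * (r zd / g zd) + r zd :=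
          cn_zs_r_ub hg1 hg hzd1 hzdm (le_of_lt hrzd) (le_of_lt hSHpos)
        have e4 : ∑ z ∈ (TIcc m g r zd).erase zd, cn m g r s 𝒥 zd z * r z ≤
            ∑ z ∈ (TIcc m g r zd).erase zd, SH m g r s 𝒥 z * (r z / g z) := by
          apply Finset.sum_le_sum
          intro z hz
          have hzT := Finset.mem_of_mem_erase hz
          have hzne := Finset.ne_of_mem_erase hz
          obtain ⟨ha, hb⟩ := hTIb z hzT
          exact cn_mul_r_le hg1 hg hsnn hzd1 hzdm
            ((mem_TIcc_iff hzd1 hzdm).mp hzT) hzne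
            (le_of_lt (r_pos hr1 hr ha hb))
        rw [e1, e2]
        linarith
      -- final arithmetic
      have hfin : r zd ≤ 8 / 7 * (r zt - r z') := by linarith
      linarith
  · -- upper bound
    have h1 : OPT1 m g r s 𝒥 ≤ cost m r w := by
      rw [OPT1]
      exact csInf_le hbdd hmem
    linarith

end BSHM
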